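/- arXiv:1304.7919 — 4 statements merged into one kernel-verified Lean document; each statement's English description precedes it below -/
import Mathlib

section
/- Karamata's Tauberian theorem: Let f : [0,∞) → ℝ be a nonnegative measurable function, let ρ ∈ [0,∞), and let L : (0,∞) → (0,∞) be slowly varying at infinity (i.e. for every c > 0, L(ct)/L(t) → 1 as t → ∞). Then the relation ∫₀^∞ e^{−st} f(t) dt ~ s^{−ρ} L(1/s) as s → 0⁺ holds if and only if ∫₀^t f(u) du ~ t^ρ L(t) / Γ(ρ+1) as t → ∞ (where a(x) ~ b(x) means the ratio a(x)/b(x) tends to 1). -/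
open MeasureTheory Filter Set Topology

set_option maxHeartbeats 1000000

namespace KaramataAux


noncomputable def U (f : ℝ → ℝ) (t : ℝ) : ℝ := ∫ u in Ioc (0:ℝ) t, f u

noncomputable def om (f : ℝ → ℝ) (s : ℝ) : ℝ := ∫ t in Ioi (0:ℝ), Real.exp (-s * t) * f t

lemma U_nonneg {f : ℝ → ℝ} (hf : ∀ t, 0 < t → 0 ≤ f t) (t : ℝ) : 0 ≤ U f t := by
  apply setIntegral_nonneg measurableSet_Ioc
  exact fun u hu => hf u hu.1

lemma U_mono {f : ℝ → ℝ} (hf : ∀ t, 0 < t → 0 ≤ f t)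
    (hloc : ∀ T : ℝ, IntegrableOn f (Ioc 0 T)) : Monotone (U f) := by
  intro a b hab
  apply setIntegral_mono_set (hloc b)
  · filter_upwards [ae_restrict_mem measurableSet_Ioc] with u hu using hf u hu.1
  · exact HasSubset.Subset.eventuallyLE (Ioc_subset_Ioc_right hab)

lemma U_measurable {f : ℝ → ℝ} (hf : ∀ t, 0 < t → 0 ≤ f t)
    (hloc : ∀ T : ℝ, IntegrableOn f (Ioc 0 T)) : Measurable (U f) :=
  (U_mono hf hloc).measurable

lemma interval_eq_U {f : ℝ → ℝ} {t : ℝ} (ht : 0 ≤ t) :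
    ∫ u in (0:ℝ)..t, f u = U f t := intervalIntegral.integral_of_le ht

/-- polynomial growth from doubling, for a monotone nonneg function -/
lemma poly_growth {W : ℝ → ℝ} (hW : Monotone W) (hW0 : ∀ t, 0 ≤ W t) {T p : ℝ}
    (hT : 0 < T) (hp : 0 ≤ p) (h2 : ∀ t, T ≤ t → W (2 * t) ≤ 2 ^ p * W t) :
    ∀ t, T ≤ t → ∀ x, 1 ≤ x → W (x * t) ≤ 2 ^ p * x ^ p * W t := by
  intro t ht x hx
  have h2p : (0:ℝ) ≤ 2 ^ p := (Real.rpow_pos_of_pos two_pos p).le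
  have hiter : ∀ n : ℕ, W ((2:ℝ) ^ n * t) ≤ (2 ^ p) ^ n * W t := by
    intro n
    induction n with
    | zero => simp
    | succ n ih =>
      have h1 : ((2:ℝ)) ^ (n+1) * t = 2 * ((2:ℝ) ^ n * t) := by ring
      have h2n : T ≤ (2:ℝ) ^ n * t := by
        calc T ≤ t := ht
        _ ≤ (2:ℝ) ^ n * t := by
            nlinarith [one_le_pow₀ (M₀ := ℝ) (a := 2) (by norm_num : (1:ℝ) ≤ 2) (n := n),
              hT.le.trans ht]
      calc W ((2:ℝ) ^ (n+1) * t) = W (2 * ((2:ℝ) ^ n * t)) := by rw [h1]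
      _ ≤ 2 ^ p * W ((2:ℝ) ^ n * t) := h2 _ h2n
      _ ≤ 2 ^ p * ((2 ^ p) ^ n * W t) := by
          exact mul_le_mul_of_nonneg_left ih h2p
      _ = (2 ^ p) ^ (n+1) * W t := by ring
  set n : ℕ := ⌈Real.logb 2 x⌉₊ with hn
  have hx0 : (0:ℝ) < x := lt_of_lt_of_le one_pos hx
  have hlogb : 0 ≤ Real.logb 2 x := Real.logb_nonneg one_lt_two hx
  have hxle : x ≤ (2:ℝ) ^ (n:ℝ) := by
    calc x = (2:ℝ) ^ (Real.logb 2 x) := (Real.rpow_logb two_pos (by norm_num) hx0).symm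
    _ ≤ (2:ℝ) ^ (n:ℝ) :=
        Real.rpow_le_rpow_of_exponent_le one_le_two (Nat.le_ceil _)
  have hnle : (n:ℝ) ≤ Real.logb 2 x + 1 := (Nat.ceil_lt_add_one hlogb).le
  have ht0 : 0 < t := hT.trans_le ht
  have step1 : W (x * t) ≤ W ((2:ℝ) ^ (n:ℝ) * t) :=
    hW (by nlinarith)
  have hrw : (2:ℝ) ^ (n:ℝ) = (2:ℝ) ^ n := by
    rw [Real.rpow_natCast]
  have step2 : W ((2:ℝ) ^ n * t) ≤ (2 ^ p) ^ n * W t := hiter n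
  have key : ((2:ℝ) ^ p) ^ n ≤ 2 ^ p * x ^ p := by
    have e1 : ((2:ℝ) ^ p) ^ n = ((2:ℝ) ^ (n:ℝ)) ^ p := by
      rw [← Real.rpow_natCast ((2:ℝ)^p) n, ← Real.rpow_mul (by norm_num), mul_comm,
        Real.rpow_mul (by norm_num), Real.rpow_natCast]
    have e2 : ((2:ℝ) ^ (n:ℝ)) ≤ 2 * x := by
      calc ((2:ℝ) ^ (n:ℝ)) ≤ (2:ℝ) ^ (Real.logb 2 x + 1) :=
        Real.rpow_le_rpow_of_exponent_le one_le_two hnle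
      _ = 2 * x := by
          rw [Real.rpow_add two_pos, Real.rpow_logb two_pos (by norm_num) hx0,
            Real.rpow_one]; ring
    calc ((2:ℝ) ^ p) ^ n = ((2:ℝ) ^ (n:ℝ)) ^ p := e1
    _ ≤ (2 * x) ^ p := Real.rpow_le_rpow (Real.rpow_nonneg (by norm_num) _) e2 hp
    _ = 2 ^ p * x ^ p := Real.mul_rpow (by norm_num) hx0.le
  calc W (x * t) ≤ W ((2:ℝ) ^ (n:ℝ) * t) := step1
  _ = W ((2:ℝ) ^ n * t) := by rw [hrw]
  _ ≤ (2 ^ p) ^ n * W t := step2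
  _ ≤ 2 ^ p * x ^ p * W t := mul_le_mul_of_nonneg_right key (hW0 t)





/-- Tonelli step: the Laplace lintegral of `f` equals the lintegral of
`s·e^{-su}` against the partial lintegrals. -/
lemma laplace_lintegral_eq {f : ℝ → ℝ} (hf_meas : Measurable f)
    {s : ℝ} (hs : 0 < s) :
    ∫⁻ t in Ioi (0:ℝ), ENNReal.ofReal (Real.exp (-s * t) * f t)
      = ∫⁻ u in Ioi (0:ℝ),
          ENNReal.ofReal (s * Real.exp (-s * u)) * ∫⁻ t in Ioc (0:ℝ) u, ENNReal.ofReal (f t) := by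
  classical
  set S : Set (ℝ × ℝ) := {p | 0 < p.1 ∧ p.1 < p.2} with hS
  have hSmeas : MeasurableSet S :=
    (measurableSet_lt measurable_const measurable_fst).inter
      (measurableSet_lt measurable_fst measurable_snd)
  set H : ℝ × ℝ → ENNReal := S.indicator
    (fun p => ENNReal.ofReal (f p.1) * ENNReal.ofReal (s * Real.exp (-s * p.2))) with hH
  have hHmeas : Measurable H := by
    apply Measurable.indicator _ hSmeas
    apply Measurable.fun_mul
    · exact (ENNReal.measurable_ofReal.comp hf_meas).comp measurable_fst
    · apply ENNReal.measurable_ofReal.comp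
      fun_prop
  have swap := lintegral_lintegral_swap (μ := volume) (ν := volume)
    (f := fun t u => H (t, u)) (by exact hHmeas.aemeasurable)
  -- LHS of swap equals LHS of the statement
  have hL : (∫⁻ t : ℝ, ∫⁻ u : ℝ, H (t, u)) =
      ∫⁻ t in Ioi (0:ℝ), ENNReal.ofReal (Real.exp (-s * t) * f t) := by
    have inner : ∀ t : ℝ, (∫⁻ u : ℝ, H (t, u)) =
        (Ioi (0:ℝ)).indicator (fun t => ENNReal.ofReal (Real.exp (-s * t) * f t)) t := by
      intro t
      by_cases ht : 0 < t
      · have h1 : (fun u => H (t, u)) = (Ioi t).indicator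
            (fun u => ENNReal.ofReal (f t) * ENNReal.ofReal (s * Real.exp (-s * u))) := by
          funext u
          by_cases hu : t < u
          · rw [hH, indicator_of_mem (show (t,u) ∈ S from ⟨ht, hu⟩),
              indicator_of_mem (mem_Ioi.2 hu)]
          · rw [hH, indicator_of_notMem (show (t,u) ∉ S from fun h => hu h.2),
              indicator_of_notMem (fun h => hu (mem_Ioi.1 h))]
        rw [h1, lintegral_indicator measurableSet_Ioi]
        have h2 : ∫⁻ u in Ioi t, ENNReal.ofReal (f t) * ENNReal.ofReal (s * Real.exp (-s * u))
            = ENNReal.ofReal (f t) * ∫⁻ u in Ioi t, ENNReal.ofReal (s * Real.exp (-s * u)) := by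
          apply lintegral_const_mul
          fun_prop
        rw [h2]
        have h3 : ∫⁻ u in Ioi t, ENNReal.ofReal (s * Real.exp (-s * u))
            = ENNReal.ofReal (Real.exp (-s * t)) := by
          rw [← ofReal_integral_eq_lintegral_ofReal]
          · congr 1
            rw [MeasureTheory.integral_const_mul]
            have hcv : ∫ u in Ioi t, Real.exp (-s * u) = s⁻¹ * Real.exp (-(s * t)) := by
              have h := MeasureTheory.integral_comp_mul_left_Ioi
                (fun x => Real.exp (-x)) t hs
              simp only [smul_eq_mul] at h
              calc ∫ u in Ioi t, Real.exp (-s * u)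
                  = ∫ u in Ioi t, (fun x => Real.exp (-x)) (s * u) := by
                    congr 1; funext u; simp [neg_mul]
                _ = s⁻¹ * ∫ x in Ioi (s * t), Real.exp (-x) := h
                _ = s⁻¹ * Real.exp (-(s * t)) := by rw [integral_exp_neg_Ioi]
            rw [hcv]
            field_simp [neg_mul]
          · have h4 : IntegrableOn (fun u => Real.exp (-s * u)) (Ioi t) := by
              have := exp_neg_integrableOn_Ioi t hs
              apply this.congr_fun _ measurableSet_Ioi
              intro u _; simp [neg_mul]
            exact h4.const_mul s
          · filter_upwards with u
            positivity
        rw [h3, indicator_of_mem (mem_Ioi.2 ht), mul_comm,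
          ← ENNReal.ofReal_mul (Real.exp_nonneg _)]
      · have h1 : (fun u => H (t, u)) = fun _ => 0 := by
          funext u
          rw [hH, indicator_of_notMem (show (t,u) ∉ S from fun h => ht h.1)]
        rw [h1, lintegral_const, zero_mul,
          indicator_of_notMem (fun h => ht (mem_Ioi.1 h))]
    rw [lintegral_congr inner, lintegral_indicator measurableSet_Ioi]
  -- RHS of swap equals RHS of the statement
  have hR : (∫⁻ u : ℝ, ∫⁻ t : ℝ, H (t, u)) =
      ∫⁻ u in Ioi (0:ℝ),
        ENNReal.ofReal (s * Real.exp (-s * u)) * ∫⁻ t in Ioc (0:ℝ) u, ENNReal.ofReal (f t) := by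
    have inner : ∀ u : ℝ, (∫⁻ t : ℝ, H (t, u)) =
        (Ioi (0:ℝ)).indicator (fun u =>
          ENNReal.ofReal (s * Real.exp (-s * u)) * ∫⁻ t in Ioc (0:ℝ) u, ENNReal.ofReal (f t)) u := by
      intro u
      by_cases hu : 0 < u
      · have h1 : (fun t => H (t, u)) = (Ioo (0:ℝ) u).indicator
            (fun t => ENNReal.ofReal (f t) * ENNReal.ofReal (s * Real.exp (-s * u))) := by
          funext t
          by_cases ht : 0 < t ∧ t < u
          · rw [hH, indicator_of_mem (show (t,u) ∈ S from ht),
              indicator_of_mem (mem_Ioo.2 ht)]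
          · rw [hH, indicator_of_notMem (show (t,u) ∉ S from ht),
              indicator_of_notMem (fun h => ht (mem_Ioo.1 h))]
        rw [h1, lintegral_indicator measurableSet_Ioo]
        have h2 : ∫⁻ t in Ioo (0:ℝ) u, ENNReal.ofReal (f t) * ENNReal.ofReal (s * Real.exp (-s * u))
            = (∫⁻ t in Ioo (0:ℝ) u, ENNReal.ofReal (f t)) * ENNReal.ofReal (s * Real.exp (-s * u)) := by
          apply lintegral_mul_const
          exact ENNReal.measurable_ofReal.comp hf_meas
        have h3 : (volume : Measure ℝ).restrict (Ioo (0:ℝ) u)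
            = (volume : Measure ℝ).restrict (Ioc (0:ℝ) u) :=
          Measure.restrict_congr_set Ioo_ae_eq_Ioc
        rw [h2, h3, indicator_of_mem (mem_Ioi.2 hu), mul_comm]
      · have h1 : (fun t => H (t, u)) = fun _ => 0 := by
          funext t
          have hnot : (t, u) ∉ S := by
            rintro ⟨h1', h2'⟩; exact hu (h1'.trans h2')
          rw [hH, indicator_of_notMem hnot]
        rw [h1, lintegral_const, zero_mul,
          indicator_of_notMem (fun h => hu (mem_Ioi.1 h))]
    rw [lintegral_congr inner, lintegral_indicator measurableSet_Ioi]
  rw [← hL, ← hR, swap]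







/-- From integrability of the `U`-side, deduce integrability of the Laplace integrand
and the equality `om f s = ∫ s e^{-su} U u`. -/
lemma om_eq_integral {f : ℝ → ℝ} (hf_meas : Measurable f) (hf_nonneg : ∀ t, 0 < t → 0 ≤ f t)
    (hloc : ∀ T : ℝ, IntegrableOn f (Ioc 0 T)) {s : ℝ} (hs : 0 < s)
    (hUmeas : Measurable (U f))
    (hint : IntegrableOn (fun u => s * Real.exp (-s * u) * U f u) (Ioi 0)) :
    IntegrableOn (fun t => Real.exp (-s * t) * f t) (Ioi 0) ∧
      om f s = ∫ u in Ioi (0:ℝ), s * Real.exp (-s * u) * U f u := by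
  have hae_f : ∀ᵐ t ∂(volume.restrict (Ioi (0:ℝ))), 0 ≤ Real.exp (-s * t) * f t := by
    filter_upwards [ae_restrict_mem measurableSet_Ioi] with t ht
    exact mul_nonneg (Real.exp_nonneg _) (hf_nonneg t ht)
  have hae_U : ∀ᵐ u ∂(volume.restrict (Ioi (0:ℝ))), 0 ≤ s * Real.exp (-s * u) * U f u := by
    filter_upwards with u
    have : 0 ≤ U f u := setIntegral_nonneg measurableSet_Ioc fun x hx => hf_nonneg x hx.1
    positivity
  -- rewrite the RHS lintegral of the Fubini identity as the lintegral of the U-integrand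
  have hcongr : (∫⁻ u in Ioi (0:ℝ),
        ENNReal.ofReal (s * Real.exp (-s * u)) * ∫⁻ t in Ioc (0:ℝ) u, ENNReal.ofReal (f t))
      = ∫⁻ u in Ioi (0:ℝ), ENNReal.ofReal (s * Real.exp (-s * u) * U f u) := by
    apply setLIntegral_congr_fun measurableSet_Ioi
    intro u _
    have h1 : ∫⁻ t in Ioc (0:ℝ) u, ENNReal.ofReal (f t) = ENNReal.ofReal (U f u) := by
      rw [← ofReal_integral_eq_lintegral_ofReal (hloc u)]
      · rfl
      · filter_upwards [ae_restrict_mem measurableSet_Ioc] with t ht using hf_nonneg t ht.1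
    dsimp only
    rw [h1, ← ENNReal.ofReal_mul (by positivity)]
  have key := (laplace_lintegral_eq hf_meas hs).trans hcongr
  have hfin : (∫⁻ u in Ioi (0:ℝ), ENNReal.ofReal (s * Real.exp (-s * u) * U f u)) < ⊤ := by
    rw [← ofReal_integral_eq_lintegral_ofReal hint hae_U]
    exact ENNReal.ofReal_lt_top
  have hmeas1 : AEStronglyMeasurable (fun t => Real.exp (-s * t) * f t)
      (volume.restrict (Ioi (0:ℝ))) := by
    apply Measurable.aestronglyMeasurable
    fun_prop
  have hint1 : IntegrableOn (fun t => Real.exp (-s * t) * f t) (Ioi 0) := by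
    refine ⟨hmeas1, ?_⟩
    rw [hasFiniteIntegral_iff_ofReal hae_f, key]
    exact hfin
  refine ⟨hint1, ?_⟩
  have e1 := integral_eq_lintegral_of_nonneg_ae hae_f hmeas1
  have e2 := integral_eq_lintegral_of_nonneg_ae hae_U
    (by apply Measurable.aestronglyMeasurable; fun_prop :
      AEStronglyMeasurable (fun u => s * Real.exp (-s * u) * U f u) (volume.restrict (Ioi (0:ℝ))))
  rw [om, e1, e2, key]

/-- Change of variables: `om f s = ∫ e^{-x} U (x/s)`. -/
lemma om_eq_scaled {f : ℝ → ℝ} (hf_meas : Measurable f) (hf_nonneg : ∀ t, 0 < t → 0 ≤ f t)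
    (hloc : ∀ T : ℝ, IntegrableOn f (Ioc 0 T)) {s : ℝ} (hs : 0 < s)
    (hUmeas : Measurable (U f))
    (hint : IntegrableOn (fun u => s * Real.exp (-s * u) * U f u) (Ioi 0)) :
    om f s = ∫ x in Ioi (0:ℝ), Real.exp (-x) * U f (x / s) := by
  rw [(om_eq_integral hf_meas hf_nonneg hloc hs hUmeas hint).2]
  have h := MeasureTheory.integral_comp_mul_left_Ioi
    (fun y => Real.exp (-y) * U f (y / s)) 0 hs
  simp only [mul_zero, smul_eq_mul] at h
  have h2 : ∀ x : ℝ, Real.exp (-(s * x)) * U f (s * x / s) = Real.exp (-s * x) * U f x := by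
    intro x
    rw [mul_div_cancel_left₀ _ hs.ne', neg_mul]
  rw [show (fun y => Real.exp (-y) * U f (y / s)) = fun y => Real.exp (-y) * U f (y / s) from rfl] at h
  calc ∫ u in Ioi (0:ℝ), s * Real.exp (-s * u) * U f u
      = s * ∫ u in Ioi (0:ℝ), Real.exp (-s * u) * U f u := by
        rw [← MeasureTheory.integral_const_mul]
        congr 1; funext u; ring
    _ = s * ∫ u in Ioi (0:ℝ), Real.exp (-(s * u)) * U f (s * u / s) := by
        congr 1; apply setIntegral_congr_fun measurableSet_Ioi
        intro u _; exact (h2 u).symm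
    _ = s * (s⁻¹ * ∫ x in Ioi (0:ℝ), Real.exp (-x) * U f (x / s)) := by rw [h]
    _ = ∫ x in Ioi (0:ℝ), Real.exp (-x) * U f (x / s) := by
        field_simp

/-- Integrability of the `U`-side from polynomial growth of `U`. -/
lemma U_side_integrable {f : ℝ → ℝ} (hUmeas : Measurable (U f))
    (hU0 : ∀ t, 0 ≤ U f t) (hUmono : Monotone (U f))
    {T p C : ℝ} (hT : 0 < T) (hp : 0 ≤ p) (hC : 0 ≤ C)
    (hgrow : ∀ x, 1 ≤ x → U f (x * T) ≤ C * x ^ p)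
    {s : ℝ} (hs : 0 < s) :
    IntegrableOn (fun u => s * Real.exp (-s * u) * U f u) (Ioi 0) := by
  -- dominating function
  have hdom : ∀ u ∈ Ioi (0:ℝ),
      ‖s * Real.exp (-s * u) * U f u‖
        ≤ s * Real.exp (-s * u) * (U f T + C * T⁻¹ ^ p * u ^ p) := by
    intro u hu
    have hu0 : (0:ℝ) < u := hu
    have hU : U f u ≤ U f T + C * T⁻¹ ^ p * u ^ p := by
      rcases le_total u T with h | h
      · have := hUmono h
        have : U f u ≤ U f T := this
        nlinarith [Real.rpow_nonneg hu0.le p, mul_nonneg hC (Real.rpow_nonneg (inv_nonneg.2 hT.le) p),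
          mul_nonneg (mul_nonneg hC (Real.rpow_nonneg (inv_nonneg.2 hT.le) p)) (Real.rpow_nonneg hu0.le p)]
      · have hx : 1 ≤ u / T := (one_le_div hT).2 h
        have := hgrow (u / T) hx
        have heq : u / T * T = u := div_mul_cancel₀ u hT.ne'
        rw [heq] at this
        have h2 : C * (u / T) ^ p = C * T⁻¹ ^ p * u ^ p := by
          rw [div_eq_mul_inv, mul_comm u T⁻¹, Real.mul_rpow (inv_nonneg.2 hT.le) hu0.le]
          ring
        calc U f u ≤ C * (u / T) ^ p := this
          _ = C * T⁻¹ ^ p * u ^ p := h2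
          _ ≤ U f T + C * T⁻¹ ^ p * u ^ p := by nlinarith [hU0 T]
    have hnn : 0 ≤ s * Real.exp (-s * u) * U f u := by
      have := hU0 u; positivity
    rw [Real.norm_of_nonneg hnn]
    have : 0 ≤ s * Real.exp (-s * u) := by positivity
    exact mul_le_mul_of_nonneg_left hU this
  -- the dominating function is integrable
  have hGamma : IntegrableOn (fun x : ℝ => Real.exp (-x) * x ^ p) (Ioi (0:ℝ)) := by
    have := Real.GammaIntegral_convergent (s := p + 1) (by linarith)
    simpa using this
  have hexp : IntegrableOn (fun u : ℝ => Real.exp (-s * u)) (Ioi (0:ℝ)) := by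
    have := exp_neg_integrableOn_Ioi 0 hs
    apply this.congr_fun _ measurableSet_Ioi
    intro u _; simp [neg_mul]
  have hpow : IntegrableOn (fun u : ℝ => Real.exp (-s * u) * u ^ p) (Ioi (0:ℝ)) := by
    have h1 : IntegrableOn (fun u : ℝ => Real.exp (-(s * u)) * (s * u) ^ p) (Ioi (0:ℝ)) := by
      have hiff := MeasureTheory.integrableOn_Ioi_comp_mul_left_iff
        (fun x : ℝ => Real.exp (-x) * x ^ p) 0 hs
      rw [mul_zero] at hiff
      exact hiff.2 hGamma
    have h2 : ∀ u ∈ Ioi (0:ℝ), Real.exp (-(s*u)) * (s*u) ^ p = s ^ p * (Real.exp (-s * u) * u ^ p) := by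
      intro u hu
      rw [Real.mul_rpow hs.le (le_of_lt hu), neg_mul]
      ring
    have h3 : IntegrableOn (fun u : ℝ => s ^ p * (Real.exp (-s * u) * u ^ p)) (Ioi (0:ℝ)) :=
      h1.congr_fun h2 measurableSet_Ioi
    have h4 : IntegrableOn (fun u : ℝ => (s ^ p)⁻¹ * (s ^ p * (Real.exp (-s * u) * u ^ p)))
        (Ioi (0:ℝ)) := h3.const_mul (s ^ p)⁻¹
    apply h4.congr_fun _ measurableSet_Ioi
    intro u _
    field_simp
  have hdomint : IntegrableOn
      (fun u => s * Real.exp (-s * u) * (U f T + C * T⁻¹ ^ p * u ^ p)) (Ioi (0:ℝ)) := by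
    have : (fun u : ℝ => s * Real.exp (-s * u) * (U f T + C * T⁻¹ ^ p * u ^ p))
        = fun u : ℝ => (s * U f T) * Real.exp (-s * u)
            + (s * (C * T⁻¹ ^ p)) * (Real.exp (-s * u) * u ^ p) := by
      funext u; ring
    rw [this]
    exact (hexp.const_mul _).add (hpow.const_mul _)
  apply Integrable.mono hdomint
  · apply Measurable.aestronglyMeasurable; fun_prop
  · filter_upwards [ae_restrict_mem measurableSet_Ioi] with u hu
    calc ‖s * Real.exp (-s * u) * U f u‖
        ≤ s * Real.exp (-s * u) * (U f T + C * T⁻¹ ^ p * u ^ p) := hdom u hu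
      _ ≤ ‖s * Real.exp (-s * u) * (U f T + C * T⁻¹ ^ p * u ^ p)‖ := le_abs_self _







/-- Abelian core: dominated convergence gives `om f s / U f (1/s) → Γ(ρ+1)`. -/
lemma abelian_ratio {f : ℝ → ℝ} (hf_meas : Measurable f) (hf_nonneg : ∀ t, 0 < t → 0 ≤ f t)
    (hloc : ∀ T : ℝ, IntegrableOn f (Ioc 0 T))
    (hUmeas : Measurable (U f)) (hU0 : ∀ t, 0 ≤ U f t) (hUmono : Monotone (U f))
    {ρ : ℝ} (hρ : 0 ≤ ρ) {T : ℝ} (hT : 0 < T)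
    (hUTpos : ∀ t, T ≤ t → 0 < U f t)
    (hlim : ∀ c : ℝ, 0 < c → Tendsto (fun t => U f (c * t) / U f t) atTop (𝓝 (c ^ ρ)))
    (h2bound : ∀ t, T ≤ t → ∀ x, 1 ≤ x → U f (x * t) ≤ 2 ^ (ρ+1) * x ^ (ρ+1) * U f t) :
    Tendsto (fun s => om f s / U f (1 / s)) (nhdsWithin 0 (Ioi 0)) (𝓝 (Real.Gamma (ρ + 1))) := by
  have hp1 : (0:ℝ) ≤ ρ + 1 := by linarith
  have h2p : (0:ℝ) < 2 ^ (ρ+1) := Real.rpow_pos_of_pos two_pos _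
  have hint : ∀ s : ℝ, 0 < s → IntegrableOn (fun u => s * Real.exp (-s * u) * U f u) (Ioi 0) := by
    intro s hs
    apply U_side_integrable hUmeas hU0 hUmono hT hp1
      (C := 2 ^ (ρ+1) * U f T) (mul_nonneg h2p.le (hU0 T)) _ hs
    intro x hx
    have := h2bound T le_rfl x hx
    linarith
  -- the dominating function
  set g : ℝ → ℝ := fun x => Real.exp (-x) * (2 ^ (ρ+1) * (1 + x ^ (ρ+1))) with hg
  have hgint : IntegrableOn g (Ioi (0:ℝ)) := by
    have hGamma : IntegrableOn (fun x : ℝ => Real.exp (-x) * x ^ (ρ+1)) (Ioi (0:ℝ)) := by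
      have := Real.GammaIntegral_convergent (s := ρ + 2) (by linarith)
      have he : ∀ x : ℝ, Real.exp (-x) * x ^ (ρ + 2 - 1) = Real.exp (-x) * x ^ (ρ+1) := by
        intro x; rw [show ρ + 2 - 1 = ρ + 1 by ring]
      exact this.congr_fun (fun x _ => he x) measurableSet_Ioi
    have hexp : IntegrableOn (fun x : ℝ => Real.exp (-x)) (Ioi (0:ℝ)) := by
      have := exp_neg_integrableOn_Ioi 0 one_pos
      apply this.congr_fun _ measurableSet_Ioi
      intro u _; norm_num
    have : g = fun x => 2 ^ (ρ+1) * Real.exp (-x) + 2 ^ (ρ+1) * (Real.exp (-x) * x ^ (ρ+1)) := by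
      funext x; rw [hg]; ring
    rw [this]
    exact (hexp.const_mul _).add (hGamma.const_mul _)
  -- main DCT
  have main : Tendsto (fun s => ∫ x in Ioi (0:ℝ), Real.exp (-x) * (U f (x / s) / U f (1 / s)))
      (nhdsWithin 0 (Ioi 0)) (𝓝 (Real.Gamma (ρ + 1))) := by
    have hGammaEq : Real.Gamma (ρ + 1) = ∫ x in Ioi (0:ℝ), Real.exp (-x) * x ^ ρ := by
      rw [Real.Gamma_eq_integral (by linarith : (0:ℝ) < ρ + 1)]
      congr 1; funext x; rw [show ρ + 1 - 1 = ρ by ring]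
    rw [hGammaEq]
    have hmem : Ioo (0:ℝ) T⁻¹ ∈ nhdsWithin (0:ℝ) (Ioi 0) :=
      Ioo_mem_nhdsGT_of_mem ⟨le_refl 0, by positivity⟩
    apply tendsto_integral_filter_of_dominated_convergence g
    · filter_upwards with s
      apply Measurable.aestronglyMeasurable
      apply Measurable.mul (by fun_prop)
      exact (hUmeas.comp (measurable_id.div_const s)).div_const _
    · filter_upwards [hmem] with s hs
      filter_upwards [ae_restrict_mem measurableSet_Ioi] with x hx
      have hs0 : 0 < s := hs.1
      have hsT : T < 1 / s := by
        rw [lt_div_iff₀ hs0]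
        calc T * s < T * T⁻¹ := by exact mul_lt_mul_of_pos_left hs.2 hT
        _ = 1 := mul_inv_cancel₀ hT.ne'
      have hU1s : 0 < U f (1 / s) := hUTpos _ hsT.le
      have hx0 : (0:ℝ) < x := hx
      have hratio : U f (x / s) / U f (1 / s) ≤ 2 ^ (ρ+1) * (1 + x ^ (ρ+1)) := by
        rcases le_total x 1 with hx1 | hx1
        · have hdiv : x / s ≤ 1 / s := by gcongr
          have : U f (x / s) ≤ U f (1 / s) := hUmono hdiv
          have h1 : U f (x / s) / U f (1 / s) ≤ 1 := by
            rw [div_le_one hU1s]; exact this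
          have h2 : (1:ℝ) ≤ 2 ^ (ρ+1) * (1 + x ^ (ρ+1)) := by
            have : (1:ℝ) ≤ 2 ^ (ρ+1) := Real.one_le_rpow one_le_two hp1
            nlinarith [Real.rpow_nonneg hx0.le (ρ+1)]
          linarith
        · have hb := h2bound (1/s) hsT.le x hx1
          have hxs : x * (1/s) = x / s := by ring
          rw [hxs] at hb
          have : U f (x / s) / U f (1 / s) ≤ 2 ^ (ρ+1) * x ^ (ρ+1) := by
            rw [div_le_iff₀ hU1s]; linarith
          have h2 : 2 ^ (ρ+1) * x ^ (ρ+1) ≤ 2 ^ (ρ+1) * (1 + x ^ (ρ+1)) := by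
            nlinarith
          linarith
      have hnn : 0 ≤ Real.exp (-x) * (U f (x / s) / U f (1 / s)) := by
        have := hU0 (x/s); positivity
      rw [Real.norm_of_nonneg hnn, hg]
      exact mul_le_mul_of_nonneg_left hratio (Real.exp_nonneg _)
    · exact hgint
    · filter_upwards [ae_restrict_mem measurableSet_Ioi] with x hx
      have hx0 : (0:ℝ) < x := hx
      have hcomp : Tendsto (fun s : ℝ => 1 / s) (nhdsWithin 0 (Ioi 0)) atTop := by
        simpa [one_div] using tendsto_inv_nhdsGT_zero (𝕜 := ℝ)
      have h1 : Tendsto (fun s : ℝ => U f (x * (1/s)) / U f (1/s)) (nhdsWithin 0 (Ioi 0))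
          (𝓝 (x ^ ρ)) := (hlim x hx0).comp hcomp
      have h2 : ∀ s : ℝ, U f (x * (1/s)) / U f (1/s) = U f (x / s) / U f (1/s) := by
        intro s; rw [mul_one_div]
      rw [show (fun s : ℝ => U f (x * (1/s)) / U f (1/s))
          = fun s : ℝ => U f (x / s) / U f (1/s) from funext h2] at h1
      exact h1.const_mul (Real.exp (-x))
  -- identify the integrals eventually
  have heq : ∀ᶠ s in nhdsWithin (0:ℝ) (Ioi 0),
      (∫ x in Ioi (0:ℝ), Real.exp (-x) * (U f (x / s) / U f (1 / s)))
        = om f s / U f (1 / s) := by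
    have hmem : Ioo (0:ℝ) T⁻¹ ∈ nhdsWithin (0:ℝ) (Ioi 0) :=
      Ioo_mem_nhdsGT_of_mem ⟨le_refl 0, by positivity⟩
    filter_upwards [hmem] with s hs
    have hs0 : 0 < s := hs.1
    rw [om_eq_scaled hf_meas hf_nonneg hloc hs0 hUmeas (hint s hs0), ← integral_div]
    congr 1; funext x; rw [mul_div_assoc]
  exact main.congr' heq






/-- The Abelian direction of Karamata's theorem. -/
lemma abelian {f : ℝ → ℝ} (hf_meas : Measurable f) (hf_nonneg : ∀ t, 0 < t → 0 ≤ f t)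
    {ρ : ℝ} (hρ : 0 ≤ ρ) {L : ℝ → ℝ} (hL_pos : ∀ t, 0 < t → 0 < L t)
    (hL_slow : ∀ c : ℝ, 0 < c → Tendsto (fun t => L (c * t) / L t) atTop (𝓝 1))
    (hRHS : Tendsto (fun t : ℝ => U f t / (t ^ ρ * L t / Real.Gamma (ρ + 1))) atTop (𝓝 1)) :
    Tendsto (fun s : ℝ => om f s / (s ^ (-ρ) * L (1 / s))) (nhdsWithin 0 (Ioi 0)) (𝓝 1) := by
  have hΓpos : 0 < Real.Gamma (ρ + 1) := Real.Gamma_pos_of_pos (by linarith)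
  -- positivity and nonvanishing of U beyond some T₀
  have hhalf : ∀ᶠ t in atTop, 1/2 < U f t / (t ^ ρ * L t / Real.Gamma (ρ + 1)) :=
    hRHS.eventually (eventually_gt_nhds (by norm_num))
  obtain ⟨T₀, hT₀⟩ := (hhalf.and (eventually_ge_atTop 1)).exists_forall_of_atTop
  have hT₀pos : ∀ t, T₀ ≤ t → (1 ≤ t ∧ 0 < U f t) := by
    intro t ht
    obtain ⟨h1, h2⟩ := hT₀ t ht
    refine ⟨h2, ?_⟩
    have ht0 : (0:ℝ) < t := lt_of_lt_of_le one_pos h2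
    have hden : 0 < t ^ ρ * L t / Real.Gamma (ρ + 1) := by
      have := hL_pos t ht0
      have := Real.rpow_pos_of_pos ht0 ρ
      positivity
    by_contra hU
    push_neg at hU
    have : U f t / (t ^ ρ * L t / Real.Gamma (ρ + 1)) ≤ 0 :=
      div_nonpos_of_nonpos_of_nonneg hU hden.le
    linarith
  -- local integrability
  have hloc : ∀ T : ℝ, IntegrableOn f (Ioc 0 T) := by
    intro T
    set t := max T (max T₀ 1) with htdef
    have htT₀ : T₀ ≤ t := le_trans (le_max_left _ _) (le_max_right _ _)
    have hUt : 0 < U f t := (hT₀pos t htT₀).2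
    have hInt : IntegrableOn f (Ioc 0 t) := by
      by_contra hni
      rw [U, MeasureTheory.integral_undef hni] at hUt
      exact lt_irrefl 0 hUt
    exact hInt.mono_set (Ioc_subset_Ioc_right (le_max_left _ _))
  have hU0 : ∀ t, 0 ≤ U f t := U_nonneg hf_nonneg
  have hUmono : Monotone (U f) := U_mono hf_nonneg hloc
  have hUmeas : Measurable (U f) := U_measurable hf_nonneg hloc
  -- base limit: U f t / (t^ρ L t) → Γ(ρ+1)⁻¹
  have hbase : Tendsto (fun t : ℝ => U f t / (t ^ ρ * L t)) atTop (𝓝 (Real.Gamma (ρ+1))⁻¹) := by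
    have h1 := hRHS.mul_const (Real.Gamma (ρ+1))⁻¹
    rw [one_mul] at h1
    apply h1.congr
    intro t
    rw [div_div_eq_mul_div, div_mul_eq_mul_div, mul_assoc, mul_inv_cancel₀ hΓpos.ne', mul_one]
  -- limits U(ct)/U(t) → c^ρ
  have hlim : ∀ c : ℝ, 0 < c → Tendsto (fun t => U f (c * t) / U f t) atTop (𝓝 (c ^ ρ)) := by
    intro c hc
    have hcomp : Tendsto (fun t : ℝ => c * t) atTop atTop :=
      Tendsto.const_mul_atTop hc tendsto_id
    have hA : Tendsto (fun t : ℝ => U f (c*t) / ((c*t) ^ ρ * L (c*t))) atTop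
        (𝓝 (Real.Gamma (ρ+1))⁻¹) := hbase.comp hcomp
    have hB : Tendsto (fun t : ℝ => (t ^ ρ * L t) / U f t) atTop
        (𝓝 ((Real.Gamma (ρ+1))⁻¹)⁻¹) := by
      have hB0 := hbase.inv₀ (by simpa using hΓpos.ne')
      exact hB0.congr (fun t => inv_div _ _)
    have hC : Tendsto (fun t : ℝ => L (c * t) / L t) atTop (𝓝 1) := hL_slow c hc
    have hprod := (hA.mul hC).mul hB
    rw [inv_inv] at hprod
    have hval : (Real.Gamma (ρ+1))⁻¹ * 1 * Real.Gamma (ρ+1) = 1 := by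
      field_simp
    rw [hval] at hprod
    have hfinal := hprod.const_mul (c ^ ρ)
    rw [mul_one] at hfinal
    apply hfinal.congr'
    filter_upwards [eventually_ge_atTop (max T₀ 1)] with t ht
    have ht1 : (1:ℝ) ≤ t := le_trans (le_max_right _ _) ht
    have ht0 : (0:ℝ) < t := lt_of_lt_of_le one_pos ht1
    have hct : 0 < c * t := by positivity
    have hUt : 0 < U f t := (hT₀pos t (le_trans (le_max_left _ _) ht)).2
    have hLt : 0 < L t := hL_pos t ht0
    have hLct : 0 < L (c * t) := hL_pos _ hct
    have htρ : (0:ℝ) < t ^ ρ := Real.rpow_pos_of_pos ht0 _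
    have hctρ : (c * t) ^ ρ = c ^ ρ * t ^ ρ := Real.mul_rpow hc.le ht0.le
    rw [hctρ]
    field_simp
  -- doubling bound
  have hdb : ∀ᶠ t in atTop, U f (2 * t) ≤ 2 ^ (ρ + 1) * U f t := by
    have h2ρ : (2:ℝ) ^ ρ < 2 ^ (ρ + 1) :=
      Real.rpow_lt_rpow_of_exponent_lt one_lt_two (by linarith)
    have := (hlim 2 two_pos).eventually (eventually_lt_nhds h2ρ)
    filter_upwards [this, eventually_ge_atTop T₀] with t h1 h2
    have hUt : 0 < U f t := (hT₀pos t h2).2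
    rw [div_lt_iff₀ hUt] at h1
    linarith
  obtain ⟨T₁, hT₁⟩ := (hdb.and (eventually_ge_atTop (max T₀ 1))).exists_forall_of_atTop
  have hT₁pos : 0 < T₁ ∨ True := Or.inr trivial
  set T := max T₁ 1 with hTdef
  have hTpos : (0:ℝ) < T := lt_of_lt_of_le one_pos (le_max_right _ _)
  have h2bound : ∀ t, T ≤ t → ∀ x, 1 ≤ x → U f (x * t) ≤ 2 ^ (ρ+1) * x ^ (ρ+1) * U f t := by
    apply poly_growth hUmono hU0 hTpos (by linarith)
    intro t ht
    exact (hT₁ t (le_trans (le_max_left _ _) ht)).1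
  have hUTpos : ∀ t, T ≤ t → 0 < U f t := by
    intro t ht
    refine (hT₀pos t ?_).2
    calc T₀ ≤ max T₀ 1 := le_max_left _ _
    _ ≤ T₁ := by
        by_contra hcon
        push_neg at hcon
        have := (hT₁ T₁ le_rfl).2
        exact absurd this (not_le.2 hcon)
    _ ≤ max T₁ 1 := le_max_left _ _
    _ ≤ t := ht
  -- the core limit
  have hcore := abelian_ratio hf_meas hf_nonneg hloc hUmeas hU0 hUmono hρ hTpos hUTpos hlim h2bound
  -- compose base limit with 1/s
  have hinv : Tendsto (fun s : ℝ => 1 / s) (nhdsWithin 0 (Ioi 0)) atTop := by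
    simpa [one_div] using tendsto_inv_nhdsGT_zero (𝕜 := ℝ)
  have hb2 : Tendsto (fun s : ℝ => U f (1/s) / ((1/s) ^ ρ * L (1/s))) (nhdsWithin 0 (Ioi 0))
      (𝓝 (Real.Gamma (ρ+1))⁻¹) := hbase.comp hinv
  have hfinal := hcore.mul hb2
  have hval : Real.Gamma (ρ+1) * (Real.Gamma (ρ+1))⁻¹ = 1 := mul_inv_cancel₀ hΓpos.ne'
  rw [hval] at hfinal
  apply hfinal.congr'
  have hmem : Ioo (0:ℝ) T⁻¹ ∈ nhdsWithin (0:ℝ) (Ioi 0) :=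
    Ioo_mem_nhdsGT_of_mem ⟨le_refl 0, by positivity⟩
  filter_upwards [hmem] with s hs
  have hs0 : 0 < s := hs.1
  have hsT : T ≤ 1 / s := by
    rw [le_div_iff₀ hs0]
    nlinarith [hs.2, mul_lt_mul_of_pos_left hs.2 hTpos, mul_inv_cancel₀ hTpos.ne']
  have hU1s : 0 < U f (1/s) := hUTpos _ hsT
  have hL1s : 0 < L (1/s) := hL_pos _ (by positivity)
  have hsρ : (1/s) ^ ρ = s ^ (-ρ) := by
    rw [one_div, ← Real.rpow_neg_one s, ← Real.rpow_mul hs0.le, neg_one_mul]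
  have hsρpos : (0:ℝ) < s ^ (-ρ) := Real.rpow_pos_of_pos hs0 _
  rw [← hsρ]
  field_simp





variable {f : ℝ → ℝ} {ρ : ℝ} {L : ℝ → ℝ}

/-- Eventually, `om f s` is positive and the Laplace integrand is integrable. -/
lemma eventually_om_pos (hf_meas : Measurable f) (hf_nonneg : ∀ t, 0 < t → 0 ≤ f t)
    (hρ : 0 ≤ ρ) (hL_pos : ∀ t, 0 < t → 0 < L t)
    (hLHS : Tendsto (fun s : ℝ => om f s / (s ^ (-ρ) * L (1 / s)))
      (nhdsWithin 0 (Ioi 0)) (𝓝 1)) :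
    ∀ᶠ s in nhdsWithin (0:ℝ) (Ioi 0),
      0 < om f s ∧ IntegrableOn (fun t => Real.exp (-s * t) * f t) (Ioi 0) := by
  have hhalf : ∀ᶠ s in nhdsWithin (0:ℝ) (Ioi 0),
      1/2 < om f s / (s ^ (-ρ) * L (1 / s)) :=
    hLHS.eventually (eventually_gt_nhds (by norm_num))
  filter_upwards [hhalf, self_mem_nhdsWithin] with s hs hs0
  have hs0' : (0:ℝ) < s := hs0
  have hden : 0 < s ^ (-ρ) * L (1/s) := by
    have h1 : 0 < s ^ (-ρ) := Real.rpow_pos_of_pos hs0' _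
    have h2 : 0 < L (1/s) := hL_pos _ (by positivity)
    positivity
  have hom : 0 < om f s := by
    by_contra h
    push_neg at h
    have : om f s / (s ^ (-ρ) * L (1/s)) ≤ 0 := div_nonpos_of_nonpos_of_nonneg h hden.le
    linarith
  refine ⟨hom, ?_⟩
  by_contra hni
  rw [om, MeasureTheory.integral_undef hni] at hom
  exact lt_irrefl 0 hom

/-- Laplace integrability at one point gives local integrability of `f`. -/
lemma loc_integrable_of_laplace (hf_meas : Measurable f) (hf_nonneg : ∀ t, 0 < t → 0 ≤ f t)
    {s₀ : ℝ} (hs₀ : 0 < s₀)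
    (hint : IntegrableOn (fun t => Real.exp (-s₀ * t) * f t) (Ioi 0)) :
    ∀ T : ℝ, IntegrableOn f (Ioc 0 T) := by
  intro T
  have hsub : IntegrableOn (fun t => Real.exp (-s₀ * t) * f t) (Ioc 0 T) :=
    hint.mono_set Ioc_subset_Ioi_self
  have h := hsub.const_mul (Real.exp (s₀ * T))
  apply h.mono
  · exact hf_meas.aestronglyMeasurable
  · filter_upwards [ae_restrict_mem measurableSet_Ioc] with t ht
    have ht0 : 0 < t := ht.1
    have hfnn := hf_nonneg t ht0
    rw [Real.norm_of_nonneg hfnn]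
    have hbig : f t ≤ Real.exp (s₀ * T) * (Real.exp (-s₀ * t) * f t) := by
      rw [← mul_assoc, ← Real.exp_add]
      have h1 : (0:ℝ) ≤ s₀ * T + -s₀ * t := by nlinarith [ht.2]
      nlinarith [Real.one_le_exp h1]
    calc f t ≤ Real.exp (s₀ * T) * (Real.exp (-s₀ * t) * f t) := hbig
      _ ≤ ‖Real.exp (s₀ * T) * (Real.exp (-s₀ * t) * f t)‖ := le_abs_self _

/-- Integrability at scaled parameters. -/
lemma laplace_integrable_mul (hf_meas : Measurable f) (hf_nonneg : ∀ t, 0 < t → 0 ≤ f t)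
    {s s' : ℝ} (hs : 0 < s) (hss' : s ≤ s')
    (hint : IntegrableOn (fun t => Real.exp (-s * t) * f t) (Ioi 0)) :
    IntegrableOn (fun t => Real.exp (-s' * t) * f t) (Ioi 0) := by
  refine Integrable.mono hint (f := fun t => Real.exp (-s' * t) * f t)
    (by apply Measurable.aestronglyMeasurable; fun_prop) ?_
  · filter_upwards [ae_restrict_mem measurableSet_Ioi] with t ht
    have ht0 : (0:ℝ) < t := ht
    have hfnn := hf_nonneg t ht0
    have h1 : Real.exp (-s' * t) ≤ Real.exp (-s * t) :=
      Real.exp_le_exp.2 (by nlinarith)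
    rw [Real.norm_of_nonneg (by positivity), Real.norm_of_nonneg (by positivity)]
    exact mul_le_mul_of_nonneg_right h1 hfnn

/-- The key scaling limit: `om f (k s) / om f s → k^(-ρ)`. -/
lemma omlim (hf_meas : Measurable f) (hf_nonneg : ∀ t, 0 < t → 0 ≤ f t)
    (hρ : 0 ≤ ρ) (hL_pos : ∀ t, 0 < t → 0 < L t)
    (hL_slow : ∀ c : ℝ, 0 < c → Tendsto (fun t => L (c * t) / L t) atTop (𝓝 1))
    (hLHS : Tendsto (fun s : ℝ => om f s / (s ^ (-ρ) * L (1 / s)))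
      (nhdsWithin 0 (Ioi 0)) (𝓝 1))
    {c : ℝ} (hc : 1 ≤ c) :
    Tendsto (fun s : ℝ => om f (c * s) / om f s) (nhdsWithin 0 (Ioi 0)) (𝓝 (c ^ (-ρ))) := by
  have hc0 : (0:ℝ) < c := lt_of_lt_of_le one_pos hc
  set D : ℝ → ℝ := fun s => s ^ (-ρ) * L (1/s) with hD
  have hk : Tendsto (fun s : ℝ => c * s) (nhdsWithin (0:ℝ) (Ioi 0)) (nhdsWithin 0 (Ioi 0)) := by
    rw [tendsto_nhdsWithin_iff]
    constructor
    · have h1 : Tendsto (fun s : ℝ => c * s) (𝓝 0) (𝓝 (c * 0)) :=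
        (continuous_const.mul continuous_id).tendsto 0
      rw [mul_zero] at h1
      exact h1.mono_left nhdsWithin_le_nhds
    · filter_upwards [self_mem_nhdsWithin] with s hs
      exact mul_pos hc0 hs
  have hA : Tendsto (fun s : ℝ => om f (c * s) / D (c * s)) (nhdsWithin 0 (Ioi 0)) (𝓝 1) :=
    hLHS.comp hk
  have hinv : Tendsto (fun s : ℝ => 1 / s) (nhdsWithin (0:ℝ) (Ioi 0)) atTop := by
    simpa [one_div] using tendsto_inv_nhdsGT_zero (𝕜 := ℝ)
  have hB : Tendsto (fun s : ℝ => D (c * s) / D s) (nhdsWithin 0 (Ioi 0)) (𝓝 (c ^ (-ρ))) := by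
    have hLc : Tendsto (fun s : ℝ => L (c⁻¹ * (1/s)) / L (1/s)) (nhdsWithin 0 (Ioi 0)) (𝓝 1) :=
      (hL_slow c⁻¹ (by positivity)).comp hinv
    have h2 := hLc.const_mul (c ^ (-ρ))
    rw [mul_one] at h2
    apply h2.congr'
    filter_upwards [self_mem_nhdsWithin] with s hs
    have hs0 : (0:ℝ) < s := hs
    have e1 : (c * s) ^ (-ρ) = c ^ (-ρ) * s ^ (-ρ) := Real.mul_rpow hc0.le hs0.le
    have e2 : 1 / (c * s) = c⁻¹ * (1/s) := by field_simp
    have hs2 : s ^ (-ρ) ≠ 0 := (Real.rpow_pos_of_pos hs0 _).ne'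
    have hL2 : L (1/s) ≠ 0 := (hL_pos _ (by positivity)).ne'
    rw [hD]
    simp only
    rw [e1, e2]
    field_simp
  have hC : Tendsto (fun s : ℝ => D s / om f s) (nhdsWithin 0 (Ioi 0)) (𝓝 1) := by
    have h1 := hLHS.inv₀ one_ne_zero
    rw [inv_one] at h1
    exact h1.congr (fun s => inv_div _ _)
  have hprod := (hA.mul hB).mul hC
  rw [one_mul, mul_one] at hprod
  apply hprod.congr'
  filter_upwards [eventually_om_pos hf_meas hf_nonneg hρ hL_pos hLHS, self_mem_nhdsWithin]
    with s hom hs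
  have hs0 : (0:ℝ) < s := hs
  have hcs0 : 0 < c * s := by positivity
  have hDs : 0 < D s := by
    have h1 : 0 < s ^ (-ρ) := Real.rpow_pos_of_pos hs0 _
    have h2 : 0 < L (1/s) := hL_pos _ (by positivity)
    rw [hD]; positivity
  have hDcs : 0 < D (c * s) := by
    have h1 : 0 < (c*s) ^ (-ρ) := Real.rpow_pos_of_pos hcs0 _
    have h2 : 0 < L (1/(c*s)) := hL_pos _ (by positivity)
    rw [hD]; positivity
  field_simp

/-- value of the candidate limit of the polynomial functional -/
noncomputable def Mval (ρ : ℝ) (P : Polynomial ℝ) : ℝ :=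
  ∑ k ∈ Finset.range (P.natDegree + 1), P.coeff k * (k:ℝ) ^ (-ρ)

/-- The polynomial functional limit. -/
lemma poly_limit (hf_meas : Measurable f) (hf_nonneg : ∀ t, 0 < t → 0 ≤ f t)
    (hρ : 0 ≤ ρ) (hL_pos : ∀ t, 0 < t → 0 < L t)
    (hL_slow : ∀ c : ℝ, 0 < c → Tendsto (fun t => L (c * t) / L t) atTop (𝓝 1))
    (hLHS : Tendsto (fun s : ℝ => om f s / (s ^ (-ρ) * L (1 / s)))
      (nhdsWithin 0 (Ioi 0)) (𝓝 1))
    (P : Polynomial ℝ) (hP0 : P.coeff 0 = 0) :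
    Tendsto (fun s : ℝ => (∫ t in Ioi (0:ℝ), P.eval (Real.exp (-s * t)) * f t) / om f s)
      (nhdsWithin 0 (Ioi 0)) (𝓝 (Mval ρ P)) := by
  set n := P.natDegree + 1 with hn
  -- limit of the sum of ratios
  have hsum : Tendsto (fun s : ℝ => ∑ k ∈ Finset.range n, P.coeff k * (om f ((k:ℝ) * s) / om f s))
      (nhdsWithin 0 (Ioi 0)) (𝓝 (Mval ρ P)) := by
    rw [Mval]
    apply tendsto_finset_sum
    intro k hk
    rcases Nat.eq_zero_or_pos k with hk0 | hk1
    · subst hk0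
      simp only [hP0, Nat.cast_zero, zero_mul]
      exact tendsto_const_nhds
    · have hc : (1:ℝ) ≤ (k:ℝ) := by exact_mod_cast hk1
      exact (omlim hf_meas hf_nonneg hρ hL_pos hL_slow hLHS hc).const_mul _
  apply hsum.congr'
  filter_upwards [eventually_om_pos hf_meas hf_nonneg hρ hL_pos hLHS, self_mem_nhdsWithin]
    with s hom hs
  have hs0 : (0:ℝ) < s := hs
  -- integrability of each piece
  have hintk : ∀ k : ℕ, 1 ≤ k →
      IntegrableOn (fun t => Real.exp (-((k:ℝ) * s) * t) * f t) (Ioi 0) := by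
    intro k hk
    apply laplace_integrable_mul hf_meas hf_nonneg hs0 _ hom.2
    have : (1:ℝ) ≤ (k:ℝ) := by exact_mod_cast hk
    nlinarith
  -- expand the integral
  have hexpand : (∫ t in Ioi (0:ℝ), P.eval (Real.exp (-s * t)) * f t)
      = ∑ k ∈ Finset.range n, P.coeff k * om f ((k:ℝ) * s) := by
    have hterm : ∀ t : ℝ, P.eval (Real.exp (-s * t)) * f t
        = ∑ k ∈ Finset.range n, P.coeff k * (Real.exp (-((k:ℝ) * s) * t) * f t) := by
      intro t
      rw [Polynomial.eval_eq_sum_range, Finset.sum_mul]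
      apply Finset.sum_congr rfl
      intro k _
      rw [← Real.exp_nat_mul, mul_assoc]
      congr 2
      ring
    rw [show (fun t : ℝ => P.eval (Real.exp (-s * t)) * f t)
        = fun t : ℝ => ∑ k ∈ Finset.range n, P.coeff k * (Real.exp (-((k:ℝ) * s) * t) * f t)
        from funext hterm]
    rw [MeasureTheory.integral_finset_sum]
    · apply Finset.sum_congr rfl
      intro k _
      rw [MeasureTheory.integral_const_mul]
      rfl
    · intro k _
      rcases Nat.eq_zero_or_pos k with hk0 | hk1
      · subst hk0
        simp only [hP0, zero_mul]
        exact integrable_zero _ _ _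
      · exact ((hintk k hk1).const_mul _)
  rw [hexpand, Finset.sum_div]
  apply Finset.sum_congr rfl
  intro k _
  rw [mul_div_assoc]





lemma moment_integrable {ρ : ℝ} (hρ : 0 < ρ) {c : ℝ} (hc : 0 < c) :
    IntegrableOn (fun x => Real.exp (-c * x) * x ^ (ρ - 1)) (Ioi (0:ℝ)) := by
  have hG := Real.GammaIntegral_convergent hρ
  have hiff := MeasureTheory.integrableOn_Ioi_comp_mul_left_iff
    (fun x : ℝ => Real.exp (-x) * x ^ (ρ - 1)) 0 hc
  rw [mul_zero] at hiff
  have h1 : IntegrableOn (fun x : ℝ => Real.exp (-(c * x)) * (c * x) ^ (ρ - 1)) (Ioi 0) :=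
    hiff.2 hG
  have h2 : ∀ x ∈ Ioi (0:ℝ), Real.exp (-(c*x)) * (c*x) ^ (ρ-1)
      = c ^ (ρ-1) * (Real.exp (-c * x) * x ^ (ρ-1)) := by
    intro x hx
    rw [Real.mul_rpow hc.le (le_of_lt hx), neg_mul]
    ring
  have h3 : IntegrableOn (fun x : ℝ => c ^ (ρ-1) * (Real.exp (-c * x) * x ^ (ρ-1))) (Ioi 0) :=
    h1.congr_fun h2 measurableSet_Ioi
  have h4 : IntegrableOn
      (fun x : ℝ => (c ^ (ρ-1))⁻¹ * (c ^ (ρ-1) * (Real.exp (-c * x) * x ^ (ρ-1)))) (Ioi 0) :=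
    h3.const_mul _
  apply h4.congr_fun _ measurableSet_Ioi
  intro x _
  have : c ^ (ρ-1) ≠ 0 := (Real.rpow_pos_of_pos hc _).ne'
  field_simp

lemma moment {ρ : ℝ} (hρ : 0 < ρ) {c : ℝ} (hc : 0 < c) :
    ∫ x in Ioi (0:ℝ), Real.exp (-c * x) * x ^ (ρ - 1) = Real.Gamma ρ * c ^ (-ρ) := by
  have h := MeasureTheory.integral_comp_mul_left_Ioi
    (fun x : ℝ => Real.exp (-x) * x ^ (ρ - 1)) 0 hc
  rw [mul_zero, smul_eq_mul, ← Real.Gamma_eq_integral hρ] at h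
  have h2 : ∀ x ∈ Ioi (0:ℝ), (fun x : ℝ => Real.exp (-x) * x ^ (ρ-1)) (c * x)
      = c ^ (ρ-1) * (Real.exp (-c * x) * x ^ (ρ-1)) := by
    intro x hx
    simp only
    rw [Real.mul_rpow hc.le (le_of_lt hx), neg_mul]
    ring
  rw [setIntegral_congr_fun measurableSet_Ioi h2, MeasureTheory.integral_const_mul] at h
  have hcρ : c ^ (ρ-1) ≠ 0 := (Real.rpow_pos_of_pos hc _).ne'
  have : ∫ x in Ioi (0:ℝ), Real.exp (-c * x) * x ^ (ρ-1) = (c ^ (ρ-1))⁻¹ * (c⁻¹ * Real.Gamma ρ) := by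
    field_simp at h ⊢
    linarith [h]
  rw [this, ← Real.rpow_neg_one c, ← Real.rpow_neg hc.le, ← mul_assoc,
    ← Real.rpow_add hc, show -(ρ-1) + -1 = -ρ by ring]
  ring

/-- Integral representation of `Mval` for positive `ρ`. -/
lemma Mval_rep {ρ : ℝ} (hρ : 0 < ρ) {P : Polynomial ℝ} (hP0 : P.coeff 0 = 0) :
    IntegrableOn (fun x => P.eval (Real.exp (-x)) * x ^ (ρ - 1)) (Ioi (0:ℝ)) ∧
      Mval ρ P * Real.Gamma ρ = ∫ x in Ioi (0:ℝ), P.eval (Real.exp (-x)) * x ^ (ρ - 1) := by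
  set n := P.natDegree + 1 with hn
  have hterm : ∀ x : ℝ, P.eval (Real.exp (-x)) * x ^ (ρ-1)
      = ∑ k ∈ Finset.range n, P.coeff k * (Real.exp (-(k:ℝ) * x) * x ^ (ρ-1)) := by
    intro x
    rw [Polynomial.eval_eq_sum_range, Finset.sum_mul]
    apply Finset.sum_congr rfl
    intro k _
    rw [← Real.exp_nat_mul, mul_assoc]
    congr 2
    ring
  have hintk : ∀ k ∈ Finset.range n, IntegrableOn
      (fun x : ℝ => P.coeff k * (Real.exp (-(k:ℝ) * x) * x ^ (ρ-1))) (Ioi 0) := by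
    intro k _
    rcases Nat.eq_zero_or_pos k with hk0 | hk1
    · subst hk0
      simp only [hP0, zero_mul]
      exact integrable_zero _ _ _
    · have : (0:ℝ) < (k:ℝ) := by exact_mod_cast hk1
      exact (moment_integrable hρ this).const_mul _
  constructor
  · have := integrable_finset_sum (μ := volume.restrict (Ioi (0:ℝ))) (Finset.range n) hintk
    apply this.congr
    filter_upwards with x
    exact (hterm x).symm
  · rw [show (fun x : ℝ => P.eval (Real.exp (-x)) * x ^ (ρ-1))
        = fun x : ℝ => ∑ k ∈ Finset.range n, P.coeff k * (Real.exp (-(k:ℝ) * x) * x ^ (ρ-1))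
        from funext hterm]
    rw [MeasureTheory.integral_finset_sum _ hintk, Mval, Finset.sum_mul]
    apply Finset.sum_congr rfl
    intro k hk
    rw [MeasureTheory.integral_const_mul]
    rcases Nat.eq_zero_or_pos k with hk0 | hk1
    · subst hk0
      simp [hP0]
    · have hkpos : (0:ℝ) < (k:ℝ) := by exact_mod_cast hk1
      rw [moment hρ hkpos]
      ring

/-- Weierstrass approximation with error `ε·y`, for continuous functions vanishing near 0. -/
lemma exists_poly_approx {q : ℝ → ℝ} (hq : Continuous q) {c : ℝ} (hc : 0 < c)
    (h0 : ∀ y, y ≤ c → q y = 0) {ε : ℝ} (hε : 0 < ε) :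
    ∃ P : Polynomial ℝ, P.coeff 0 = 0 ∧ ∀ y ∈ Icc (0:ℝ) 1, |P.eval y - q y| ≤ ε * y := by
  set r : ℝ → ℝ := fun y => q y / max y c with hr
  have hrc : Continuous r := by
    apply hq.div (continuous_id.max continuous_const)
    intro y
    have : 0 < max y c := lt_of_lt_of_le hc (le_max_right _ _)
    exact this.ne'
  obtain ⟨p, hp⟩ := exists_polynomial_near_of_continuousOn 0 1 r hrc.continuousOn ε hε
  refine ⟨Polynomial.X * p, ?_, ?_⟩
  · rw [Polynomial.mul_coeff_zero, Polynomial.coeff_X_zero, zero_mul]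
  · intro y hy
    have hfact : q y = y * r y := by
      rcases le_or_gt y c with h | h
      · rw [h0 y h, hr]; simp [h0 y h]
      · rw [hr]
        simp only
        rw [max_eq_left h.le, mul_div_cancel₀]
        exact fun h' => (lt_irrefl 0 (h' ▸ hc.trans h)).elim
    have heval : (Polynomial.X * p).eval y = y * p.eval y := by simp
    rw [heval, hfact, ← mul_sub, abs_mul, abs_of_nonneg hy.1, mul_comm (ε) y]
    exact mul_le_mul_of_nonneg_left (le_of_lt (hp y hy)) hy.1




noncomputable def qup (δ : ℝ) (y : ℝ) : ℝ :=
  min 1 (max 0 ((y - Real.exp (-(1+δ))) / (Real.exp (-1) - Real.exp (-(1+δ)))))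

noncomputable def qlo (δ : ℝ) (y : ℝ) : ℝ :=
  min 1 (max 0 ((y - Real.exp (-1)) / (Real.exp (-(1-δ)) - Real.exp (-1))))

variable {δ : ℝ}

lemma qup_cont : Continuous (qup δ) := by
  apply continuous_const.min
  apply continuous_const.max
  exact (continuous_id.sub continuous_const).div_const _

lemma qlo_cont : Continuous (qlo δ) := by
  apply continuous_const.min
  apply continuous_const.max
  exact (continuous_id.sub continuous_const).div_const _

lemma qup_nonneg (y : ℝ) : 0 ≤ qup δ y := le_min zero_le_one (le_max_left _ _)
lemma qlo_nonneg (y : ℝ) : 0 ≤ qlo δ y := le_min zero_le_one (le_max_left _ _)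
lemma qup_le_one (y : ℝ) : qup δ y ≤ 1 := min_le_left _ _
lemma qlo_le_one (y : ℝ) : qlo δ y ≤ 1 := min_le_left _ _

lemma qup_denom_pos (hδ : 0 < δ) : 0 < Real.exp (-1) - Real.exp (-(1+δ)) := by
  have : Real.exp (-(1+δ)) < Real.exp (-1) := Real.exp_lt_exp.2 (by linarith)
  linarith

lemma qlo_denom_pos (hδ : 0 < δ) : 0 < Real.exp (-(1-δ)) - Real.exp (-1) := by
  have : Real.exp (-1) < Real.exp (-(1-δ)) := Real.exp_lt_exp.2 (by linarith)
  linarith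

lemma qup_zero (hδ : 0 < δ) {y : ℝ} (hy : y ≤ Real.exp (-(1+δ))) : qup δ y = 0 := by
  have hd := qup_denom_pos hδ
  have h1 : (y - Real.exp (-(1+δ))) / (Real.exp (-1) - Real.exp (-(1+δ))) ≤ 0 :=
    div_nonpos_of_nonpos_of_nonneg (by linarith) hd.le
  rw [qup, max_eq_left h1, min_eq_right zero_le_one]

lemma qup_one (hδ : 0 < δ) {y : ℝ} (hy : Real.exp (-1) ≤ y) : qup δ y = 1 := by
  have hd := qup_denom_pos hδ
  have h1 : (1:ℝ) ≤ (y - Real.exp (-(1+δ))) / (Real.exp (-1) - Real.exp (-(1+δ))) := by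
    rw [le_div_iff₀ hd]; linarith
  rw [qup, max_eq_right (by linarith), min_eq_left h1]

lemma qlo_zero (hδ : 0 < δ) {y : ℝ} (hy : y ≤ Real.exp (-1)) : qlo δ y = 0 := by
  have hd := qlo_denom_pos hδ
  have h1 : (y - Real.exp (-1)) / (Real.exp (-(1-δ)) - Real.exp (-1)) ≤ 0 :=
    div_nonpos_of_nonpos_of_nonneg (by linarith) hd.le
  rw [qlo, max_eq_left h1, min_eq_right zero_le_one]

lemma qlo_one (hδ : 0 < δ) {y : ℝ} (hy : Real.exp (-(1-δ)) ≤ y) : qlo δ y = 1 := by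
  have hd := qlo_denom_pos hδ
  have h1 : (1:ℝ) ≤ (y - Real.exp (-1)) / (Real.exp (-(1-δ)) - Real.exp (-1)) := by
    rw [le_div_iff₀ hd]; linarith
  rw [qlo, max_eq_right (by linarith), min_eq_left h1]







/-- indicator helper -/
lemma indicator_W_facts {ρ : ℝ} (hρ : 0 < ρ) {a : ℝ} (ha : 0 < a) :
    Integrable ((Ioc (0:ℝ) a).indicator (fun x => x ^ (ρ-1)))
        (volume.restrict (Ioi (0:ℝ))) ∧
      ∫ x in Ioi (0:ℝ), (Ioc (0:ℝ) a).indicator (fun x => x ^ (ρ-1)) x = a ^ ρ / ρ := by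
  have hWa : IntegrableOn (fun x : ℝ => x ^ (ρ-1)) (Ioc 0 a) := by
    rw [← intervalIntegrable_iff_integrableOn_Ioc_of_le ha.le]
    exact intervalIntegral.intervalIntegrable_rpow' (by linarith)
  have hsub : Ioc (0:ℝ) a ∩ Ioi 0 = Ioc 0 a :=
    inter_eq_self_of_subset_left Ioc_subset_Ioi_self
  constructor
  · rw [integrable_indicator_iff measurableSet_Ioc]
    rw [IntegrableOn, Measure.restrict_restrict measurableSet_Ioc, hsub]
    exact hWa
  · rw [MeasureTheory.integral_indicator measurableSet_Ioc]
    rw [Measure.restrict_restrict measurableSet_Ioc, hsub]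
    have h1 : ∫ x in Ioc (0:ℝ) a, x ^ (ρ-1) = ∫ x in (0:ℝ)..a, x ^ (ρ-1) :=
      (intervalIntegral.integral_of_le ha.le).symm
    rw [h1, integral_rpow (Or.inl (by linarith)), show ρ-1+1 = ρ by ring,
      Real.zero_rpow hρ.ne']
    ring

/-- integrability of `q(e^{-x})·x^{ρ-1}` for cut-off `q` -/
lemma qW_integrable {ρ : ℝ} (hρ : 0 < ρ) {q : ℝ → ℝ} (hq : Continuous q)
    (hq0 : ∀ y, 0 ≤ q y) (hq1 : ∀ y, q y ≤ 1) {a : ℝ} (ha : 0 < a)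
    (hcut : ∀ y, y ≤ Real.exp (-a) → q y = 0) :
    IntegrableOn (fun x => q (Real.exp (-x)) * x ^ (ρ-1)) (Ioi (0:ℝ)) := by
  obtain ⟨hind, -⟩ := indicator_W_facts hρ ha
  apply Integrable.mono hind
  · apply Continuous.aestronglyMeasurable ?_ |>.mul
    · apply Measurable.aestronglyMeasurable
      fun_prop
    · exact hq.comp (continuous_id.neg.rexp)
  · filter_upwards [ae_restrict_mem measurableSet_Ioi] with x hx
    have hx0 : (0:ℝ) < x := hx
    have hW : (0:ℝ) ≤ x ^ (ρ-1) := Real.rpow_nonneg hx0.le _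
    rcases le_or_gt x a with hxa | hxa
    · rw [indicator_of_mem (mem_Ioc.2 ⟨hx0, hxa⟩)]
      rw [Real.norm_of_nonneg (mul_nonneg (hq0 _) hW), Real.norm_of_nonneg hW]
      nlinarith [hq1 (Real.exp (-x)), hq0 (Real.exp (-x))]
    · have : q (Real.exp (-x)) = 0 := hcut _ (Real.exp_le_exp.2 (by linarith))
      rw [this, zero_mul, norm_zero]
      exact norm_nonneg _
  
/-- upper bound for Mval of a polynomial close to `qup δ` -/
lemma Mval_le_up {ρ δ ε : ℝ} (hρ : 0 ≤ ρ) (hδ : 0 < δ) (hε : 0 < ε)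
    {P : Polynomial ℝ} (hP0 : P.coeff 0 = 0)
    (happ : ∀ y ∈ Icc (0:ℝ) 1, |P.eval y - qup δ y| ≤ ε * y) :
    Mval ρ P ≤ (1+δ) ^ ρ / Real.Gamma (ρ+1) + ε := by
  rcases eq_or_lt_of_le hρ with hρ0 | hρpos
  · -- ρ = 0
    subst hρ0
    have hM : Mval 0 P = P.eval 1 := by
      rw [Mval, Polynomial.eval_eq_sum_range]
      apply Finset.sum_congr rfl
      intro k _
      rw [neg_zero, Real.rpow_zero, one_pow]
    have h1 := happ 1 ⟨zero_le_one, le_refl 1⟩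
    have hq1 : qup δ 1 = 1 := qup_one hδ (Real.exp_le_one_iff.2 (by norm_num))
    rw [hq1, mul_one] at h1
    have := abs_le.1 h1
    rw [hM, Real.rpow_zero, zero_add, Real.Gamma_one]
    linarith [this.2]
  · -- ρ > 0
    obtain ⟨hPint, hPrep⟩ := Mval_rep hρpos hP0
    have hΓ : 0 < Real.Gamma ρ := Real.Gamma_pos_of_pos hρpos
    obtain ⟨hind, hindval⟩ := indicator_W_facts hρpos (show (0:ℝ) < 1+δ by linarith)
    have hqW : IntegrableOn (fun x => qup δ (Real.exp (-x)) * x ^ (ρ-1)) (Ioi (0:ℝ)) :=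
      qW_integrable hρpos qup_cont qup_nonneg qup_le_one (show (0:ℝ) < 1+δ by linarith)
        (fun y hy => qup_zero hδ hy)
    have hexpW : IntegrableOn (fun x => Real.exp (-x) * x ^ (ρ-1)) (Ioi (0:ℝ)) :=
      Real.GammaIntegral_convergent hρpos
    -- pointwise bound
    have step1 : ∫ x in Ioi (0:ℝ), P.eval (Real.exp (-x)) * x ^ (ρ-1)
        ≤ ∫ x in Ioi (0:ℝ), (qup δ (Real.exp (-x)) * x ^ (ρ-1)
            + ε * (Real.exp (-x) * x ^ (ρ-1))) := by
      apply setIntegral_mono_on hPint (hqW.add (hexpW.const_mul ε)) measurableSet_Ioi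
      intro x hx
      have hx0 : (0:ℝ) < x := hx
      have hW : (0:ℝ) ≤ x ^ (ρ-1) := Real.rpow_nonneg hx0.le _
      have hy : Real.exp (-x) ∈ Icc (0:ℝ) 1 :=
        ⟨Real.exp_nonneg _, Real.exp_le_one_iff.2 (by linarith)⟩
      have h5 := (abs_le.1 (happ _ hy)).2
      simp only [Pi.add_apply]
      nlinarith [mul_le_mul_of_nonneg_right h5 hW]
    have step2 : ∫ x in Ioi (0:ℝ), (qup δ (Real.exp (-x)) * x ^ (ρ-1)
            + ε * (Real.exp (-x) * x ^ (ρ-1)))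
        = (∫ x in Ioi (0:ℝ), qup δ (Real.exp (-x)) * x ^ (ρ-1)) + ε * Real.Gamma ρ := by
      rw [MeasureTheory.integral_add hqW (hexpW.const_mul ε), MeasureTheory.integral_const_mul,
        ← Real.Gamma_eq_integral hρpos]
    have step3 : ∫ x in Ioi (0:ℝ), qup δ (Real.exp (-x)) * x ^ (ρ-1)
        ≤ (1+δ) ^ ρ / ρ := by
      rw [← hindval]
      apply setIntegral_mono_on hqW hind measurableSet_Ioi
      intro x hx
      have hx0 : (0:ℝ) < x := hx
      have hW : (0:ℝ) ≤ x ^ (ρ-1) := Real.rpow_nonneg hx0.le _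
      rcases le_or_gt x (1+δ) with hxa | hxa
      · rw [indicator_of_mem (mem_Ioc.2 ⟨hx0, hxa⟩)]
        nlinarith [qup_le_one (δ := δ) (Real.exp (-x))]
      · rw [qup_zero hδ (Real.exp_le_exp.2 (by linarith)), zero_mul,
          indicator_of_notMem (fun h => absurd h.2 (not_le.2 hxa))]
    have hΓ1 : Real.Gamma (ρ+1) = ρ * Real.Gamma ρ := Real.Gamma_add_one hρpos.ne'
    have hfinal : Mval ρ P * Real.Gamma ρ ≤ (1+δ) ^ ρ / ρ + ε * Real.Gamma ρ := by
      rw [hPrep]; linarith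
    rw [hΓ1]
    rw [div_mul_eq_div_div]
    have h2 : Mval ρ P ≤ ((1+δ) ^ ρ / ρ + ε * Real.Gamma ρ) / Real.Gamma ρ :=
      (le_div_iff₀ hΓ).2 hfinal
    calc Mval ρ P ≤ ((1+δ) ^ ρ / ρ + ε * Real.Gamma ρ) / Real.Gamma ρ := h2
      _ = (1+δ) ^ ρ / ρ / Real.Gamma ρ + ε := by
          field_simp
    
/-- lower bound for Mval of a polynomial close to `qlo δ` -/
lemma Mval_ge_lo {ρ δ ε : ℝ} (hρ : 0 ≤ ρ) (hδ : 0 < δ) (hδ1 : δ < 1) (hε : 0 < ε)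
    {P : Polynomial ℝ} (hP0 : P.coeff 0 = 0)
    (happ : ∀ y ∈ Icc (0:ℝ) 1, |P.eval y - qlo δ y| ≤ ε * y) :
    (1-δ) ^ ρ / Real.Gamma (ρ+1) - ε ≤ Mval ρ P := by
  rcases eq_or_lt_of_le hρ with hρ0 | hρpos
  · subst hρ0
    have hM : Mval 0 P = P.eval 1 := by
      rw [Mval, Polynomial.eval_eq_sum_range]
      apply Finset.sum_congr rfl
      intro k _
      rw [neg_zero, Real.rpow_zero, one_pow]
    have h1 := happ 1 ⟨zero_le_one, le_refl 1⟩
    have hq1 : qlo δ 1 = 1 := qlo_one hδ (Real.exp_le_one_iff.2 (by linarith))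
    rw [hq1, mul_one] at h1
    have := abs_le.1 h1
    rw [hM, Real.rpow_zero, zero_add, Real.Gamma_one]
    linarith [this.1]
  · obtain ⟨hPint, hPrep⟩ := Mval_rep hρpos hP0
    have hΓ : 0 < Real.Gamma ρ := Real.Gamma_pos_of_pos hρpos
    obtain ⟨hind, hindval⟩ := indicator_W_facts hρpos (show (0:ℝ) < 1-δ by linarith)
    have hqW : IntegrableOn (fun x => qlo δ (Real.exp (-x)) * x ^ (ρ-1)) (Ioi (0:ℝ)) :=
      qW_integrable hρpos qlo_cont qlo_nonneg qlo_le_one one_pos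
        (fun y hy => qlo_zero hδ (by simpa using hy))
    have hexpW : IntegrableOn (fun x => Real.exp (-x) * x ^ (ρ-1)) (Ioi (0:ℝ)) :=
      Real.GammaIntegral_convergent hρpos
    have step1 : ∫ x in Ioi (0:ℝ), (qlo δ (Real.exp (-x)) * x ^ (ρ-1)
            - ε * (Real.exp (-x) * x ^ (ρ-1)))
        ≤ ∫ x in Ioi (0:ℝ), P.eval (Real.exp (-x)) * x ^ (ρ-1) := by
      apply setIntegral_mono_on (hqW.sub (hexpW.const_mul ε)) hPint measurableSet_Ioi
      intro x hx
      have hx0 : (0:ℝ) < x := hx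
      have hW : (0:ℝ) ≤ x ^ (ρ-1) := Real.rpow_nonneg hx0.le _
      have hy : Real.exp (-x) ∈ Icc (0:ℝ) 1 :=
        ⟨Real.exp_nonneg _, Real.exp_le_one_iff.2 (by linarith)⟩
      have h5 := (abs_le.1 (happ _ hy)).1
      simp only [Pi.sub_apply]
      nlinarith [mul_le_mul_of_nonneg_right h5 hW]
    have step2 : ∫ x in Ioi (0:ℝ), (qlo δ (Real.exp (-x)) * x ^ (ρ-1)
            - ε * (Real.exp (-x) * x ^ (ρ-1)))
        = (∫ x in Ioi (0:ℝ), qlo δ (Real.exp (-x)) * x ^ (ρ-1)) - ε * Real.Gamma ρ := by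
      rw [MeasureTheory.integral_sub hqW (hexpW.const_mul ε), MeasureTheory.integral_const_mul,
        ← Real.Gamma_eq_integral hρpos]
    have step3 : (1-δ) ^ ρ / ρ ≤ ∫ x in Ioi (0:ℝ), qlo δ (Real.exp (-x)) * x ^ (ρ-1) := by
      rw [← hindval]
      apply setIntegral_mono_on hind hqW measurableSet_Ioi
      intro x hx
      have hx0 : (0:ℝ) < x := hx
      have hW : (0:ℝ) ≤ x ^ (ρ-1) := Real.rpow_nonneg hx0.le _
      rcases le_or_gt x (1-δ) with hxa | hxa
      · rw [indicator_of_mem (mem_Ioc.2 ⟨hx0, hxa⟩),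
          qlo_one hδ (Real.exp_le_exp.2 (by linarith)), one_mul]
      · rw [indicator_of_notMem (fun h => absurd h.2 (not_le.2 hxa))]
        exact mul_nonneg (qlo_nonneg _) hW
    have hΓ1 : Real.Gamma (ρ+1) = ρ * Real.Gamma ρ := Real.Gamma_add_one hρpos.ne'
    have hfinal : (1-δ) ^ ρ / ρ - ε * Real.Gamma ρ ≤ Mval ρ P * Real.Gamma ρ := by
      rw [hPrep]; linarith
    rw [hΓ1, div_mul_eq_div_div]
    have h2 : ((1-δ) ^ ρ / ρ - ε * Real.Gamma ρ) / Real.Gamma ρ ≤ Mval ρ P :=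
      (div_le_iff₀ hΓ).2 hfinal
    calc (1-δ) ^ ρ / ρ / Real.Gamma ρ - ε
        = ((1-δ) ^ ρ / ρ - ε * Real.Gamma ρ) / Real.Gamma ρ := by
          field_simp
      _ ≤ Mval ρ P := h2






variable {f : ℝ → ℝ} {ρ : ℝ} {L : ℝ → ℝ} {δ : ℝ}


variable {f : ℝ → ℝ} {ρ : ℝ} {L : ℝ → ℝ}

/-- Integrability of the polynomial integrand. -/
lemma Peval_integrable (hf_meas : Measurable f) (hf_nonneg : ∀ t, 0 < t → 0 ≤ f t)
    {s : ℝ} (hs : 0 < s)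
    (hint : IntegrableOn (fun t => Real.exp (-s * t) * f t) (Ioi 0))
    (P : Polynomial ℝ) (hP0 : P.coeff 0 = 0) :
    IntegrableOn (fun t => P.eval (Real.exp (-s * t)) * f t) (Ioi 0) := by
  set n := P.natDegree + 1 with hn
  have hterm : ∀ t : ℝ, P.eval (Real.exp (-s * t)) * f t
      = ∑ k ∈ Finset.range n, P.coeff k * (Real.exp (-((k:ℝ) * s) * t) * f t) := by
    intro t
    rw [Polynomial.eval_eq_sum_range, Finset.sum_mul]
    apply Finset.sum_congr rfl
    intro k _
    rw [← Real.exp_nat_mul, mul_assoc]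
    congr 2
    ring
  have hintk : ∀ k ∈ Finset.range n, IntegrableOn
      (fun t : ℝ => P.coeff k * (Real.exp (-((k:ℝ) * s) * t) * f t)) (Ioi 0) := by
    intro k _
    rcases Nat.eq_zero_or_pos k with hk0 | hk1
    · subst hk0; simp only [hP0, zero_mul]; exact integrable_zero _ _ _
    · have hk1' : (1:ℝ) ≤ (k:ℝ) := by exact_mod_cast hk1
      exact (laplace_integrable_mul hf_meas hf_nonneg hs (by nlinarith) hint).const_mul _
  have := integrable_finset_sum (μ := volume.restrict (Ioi (0:ℝ))) (Finset.range n) hintk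
  apply this.congr
  filter_upwards with t
  exact (hterm t).symm

/-- Integrability of cut-off `q` against `f`, plus indicator facts about `U`. -/
lemma q_f_integrable (hf_meas : Measurable f) (hf_nonneg : ∀ t, 0 < t → 0 ≤ f t)
    (hloc : ∀ T : ℝ, IntegrableOn f (Ioc 0 T))
    {q : ℝ → ℝ} (hq : Continuous q) (hq0 : ∀ y, 0 ≤ q y) (hq1 : ∀ y, q y ≤ 1)
    {a : ℝ} (ha : 0 < a) (hcut : ∀ y, y ≤ Real.exp (-a) → q y = 0)
    {s : ℝ} (hs : 0 < s) :
    IntegrableOn (fun t => q (Real.exp (-s * t)) * f t) (Ioi 0) := by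
  have hindint : Integrable ((Ioc (0:ℝ) (a/s)).indicator f) (volume.restrict (Ioi (0:ℝ))) := by
    rw [integrable_indicator_iff measurableSet_Ioc, IntegrableOn,
      Measure.restrict_restrict measurableSet_Ioc,
      inter_eq_self_of_subset_left Ioc_subset_Ioi_self]
    exact hloc (a/s)
  apply Integrable.mono hindint
  · apply Measurable.aestronglyMeasurable
    exact ((hq.measurable).comp (by fun_prop)).mul hf_meas
  · filter_upwards [ae_restrict_mem measurableSet_Ioi] with t ht
    have ht0 : (0:ℝ) < t := ht
    have hf0 := hf_nonneg t ht0
    rcases le_or_gt t (a/s) with hta | hta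
    · rw [indicator_of_mem (mem_Ioc.2 ⟨ht0, hta⟩)]
      rw [Real.norm_of_nonneg (mul_nonneg (hq0 _) hf0), Real.norm_of_nonneg hf0]
      nlinarith [hq1 (Real.exp (-s * t)), hq0 (Real.exp (-s * t))]
    · have hst : a ≤ s * t := by
        rw [div_lt_iff₀ hs] at hta
        nlinarith
      rw [hcut _ (Real.exp_le_exp.2 (by nlinarith)), zero_mul, norm_zero]
      exact norm_nonneg _

/-- Main Tauberian limit: `U f (1/s) / om f s → 1/Γ(ρ+1)`. -/
lemma tauberian_U_ratio (hf_meas : Measurable f) (hf_nonneg : ∀ t, 0 < t → 0 ≤ f t)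
    (hρ : 0 ≤ ρ) (hL_pos : ∀ t, 0 < t → 0 < L t)
    (hL_slow : ∀ c : ℝ, 0 < c → Tendsto (fun t => L (c * t) / L t) atTop (𝓝 1))
    (hLHS : Tendsto (fun s : ℝ => om f s / (s ^ (-ρ) * L (1 / s)))
      (nhdsWithin 0 (Ioi 0)) (𝓝 1)) :
    Tendsto (fun s : ℝ => U f (1/s) / om f s) (nhdsWithin 0 (Ioi 0))
      (𝓝 (1 / Real.Gamma (ρ+1))) := by
  set A := 1 / Real.Gamma (ρ+1) with hA
  have hΓ : 0 < Real.Gamma (ρ+1) := Real.Gamma_pos_of_pos (by linarith)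
  rw [Metric.tendsto_nhds]
  intro ε₀ hε₀
  -- choose δ
  have hup_cont : Tendsto (fun d : ℝ => (1+d) ^ ρ / Real.Gamma (ρ+1)) (𝓝 0)
      (𝓝 A) := by
    have h1 : Tendsto (fun d : ℝ => (1+d)) (𝓝 (0:ℝ)) (𝓝 1) := by
      simpa using (tendsto_id : Tendsto id (𝓝 (0:ℝ)) (𝓝 0)).const_add (1:ℝ)
    have h2 : Tendsto (fun y : ℝ => y ^ ρ) (𝓝 1) (𝓝 ((1:ℝ) ^ ρ)) :=
      (Real.continuousAt_rpow_const 1 ρ (Or.inl one_ne_zero)).tendsto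
    rw [Real.one_rpow] at h2
    have := (h2.comp h1).div_const (Real.Gamma (ρ+1))
    simpa [hA] using this
  have hlo_cont : Tendsto (fun d : ℝ => (1-d) ^ ρ / Real.Gamma (ρ+1)) (𝓝 0)
      (𝓝 A) := by
    have h1 : Tendsto (fun d : ℝ => (1-d)) (𝓝 (0:ℝ)) (𝓝 1) := by
      simpa using (tendsto_id : Tendsto id (𝓝 (0:ℝ)) (𝓝 0)).const_sub (1:ℝ)
    have h2 : Tendsto (fun y : ℝ => y ^ ρ) (𝓝 1) (𝓝 ((1:ℝ) ^ ρ)) :=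
      (Real.continuousAt_rpow_const 1 ρ (Or.inl one_ne_zero)).tendsto
    rw [Real.one_rpow] at h2
    have := (h2.comp h1).div_const (Real.Gamma (ρ+1))
    simpa [hA] using this
  have hδexists : ∃ δ : ℝ, 0 < δ ∧ δ < 1 ∧
      (1+δ) ^ ρ / Real.Gamma (ρ+1) < A + ε₀/4 ∧
      A - ε₀/4 < (1-δ) ^ ρ / Real.Gamma (ρ+1) := by
    have e1 : ∀ᶠ d in nhdsWithin (0:ℝ) (Ioi 0),
        (1+d) ^ ρ / Real.Gamma (ρ+1) < A + ε₀/4 :=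
      ((hup_cont.mono_left nhdsWithin_le_nhds).eventually
        (eventually_lt_nhds (by linarith)))
    have e2 : ∀ᶠ d in nhdsWithin (0:ℝ) (Ioi 0),
        A - ε₀/4 < (1-d) ^ ρ / Real.Gamma (ρ+1) :=
      ((hlo_cont.mono_left nhdsWithin_le_nhds).eventually
        (eventually_gt_nhds (by linarith)))
    have e3 : ∀ᶠ d in nhdsWithin (0:ℝ) (Ioi 0), d ∈ Ioo (0:ℝ) 1 :=
      Ioo_mem_nhdsGT_of_mem ⟨le_refl 0, one_pos⟩
    obtain ⟨δ, h1, h2, h3⟩ := (e1.and (e2.and e3)).exists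
    exact ⟨δ, h3.1, h3.2, h1, h2⟩
  obtain ⟨δ, hδ0, hδ1, hδup, hδlo⟩ := hδexists
  -- polynomials
  obtain ⟨Pu, hPu0, hPuapp⟩ := exists_poly_approx qup_cont (Real.exp_pos (-(1+δ)))
    (fun y hy => qup_zero hδ0 hy) (show (0:ℝ) < ε₀/4 by linarith)
  obtain ⟨Pl, hPl0, hPlapp⟩ := exists_poly_approx qlo_cont (Real.exp_pos (-1))
    (fun y hy => qlo_zero hδ0 hy) (show (0:ℝ) < ε₀/4 by linarith)
  have hMu : Mval ρ Pu ≤ (1+δ) ^ ρ / Real.Gamma (ρ+1) + ε₀/4 :=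
    Mval_le_up hρ hδ0 (by linarith) hPu0 hPuapp
  have hMl : (1-δ) ^ ρ / Real.Gamma (ρ+1) - ε₀/4 ≤ Mval ρ Pl :=
    Mval_ge_lo hρ hδ0 hδ1 (by linarith) hPl0 hPlapp
  -- limits of polynomial functionals
  have hTu := poly_limit hf_meas hf_nonneg hρ hL_pos hL_slow hLHS Pu hPu0
  have hTl := poly_limit hf_meas hf_nonneg hρ hL_pos hL_slow hLHS Pl hPl0
  have hTue : ∀ᶠ s in nhdsWithin (0:ℝ) (Ioi 0),
      (∫ t in Ioi (0:ℝ), Pu.eval (Real.exp (-s * t)) * f t) / om f s < Mval ρ Pu + ε₀/4 :=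
    hTu.eventually (eventually_lt_nhds (by linarith))
  have hTle : ∀ᶠ s in nhdsWithin (0:ℝ) (Ioi 0),
      Mval ρ Pl - ε₀/4 < (∫ t in Ioi (0:ℝ), Pl.eval (Real.exp (-s * t)) * f t) / om f s :=
    hTl.eventually (eventually_gt_nhds (by linarith))
  -- main eventual estimate
  filter_upwards [hTue, hTle, eventually_om_pos hf_meas hf_nonneg hρ hL_pos hLHS,
    self_mem_nhdsWithin] with s hsu hsl hsom hs
  have hs0 : (0:ℝ) < s := hs
  obtain ⟨hom, hint⟩ := hsom
  have hloc : ∀ T : ℝ, IntegrableOn f (Ioc 0 T) :=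
    loc_integrable_of_laplace hf_meas hf_nonneg hs0 hint
  -- integrabilities
  have hqu_int : IntegrableOn (fun t => qup δ (Real.exp (-s * t)) * f t) (Ioi 0) :=
    q_f_integrable hf_meas hf_nonneg hloc qup_cont qup_nonneg qup_le_one
      (show (0:ℝ) < 1+δ by linarith) (fun y hy => qup_zero hδ0 hy) hs0
  have hql_int : IntegrableOn (fun t => qlo δ (Real.exp (-s * t)) * f t) (Ioi 0) :=
    q_f_integrable hf_meas hf_nonneg hloc qlo_cont qlo_nonneg qlo_le_one
      one_pos (fun y hy => qlo_zero hδ0 (by simpa using hy)) hs0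
  have hPu_int := Peval_integrable hf_meas hf_nonneg hs0 hint Pu hPu0
  have hPl_int := Peval_integrable hf_meas hf_nonneg hs0 hint Pl hPl0
  -- U as indicator integral
  have hUind : Integrable ((Ioc (0:ℝ) (1/s)).indicator f) (volume.restrict (Ioi (0:ℝ))) := by
    rw [integrable_indicator_iff measurableSet_Ioc, IntegrableOn,
      Measure.restrict_restrict measurableSet_Ioc,
      inter_eq_self_of_subset_left Ioc_subset_Ioi_self]
    exact hloc (1/s)
  have hUeq : U f (1/s) = ∫ t in Ioi (0:ℝ), (Ioc (0:ℝ) (1/s)).indicator f t := by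
    rw [MeasureTheory.integral_indicator measurableSet_Ioc,
      Measure.restrict_restrict measurableSet_Ioc,
      inter_eq_self_of_subset_left Ioc_subset_Ioi_self, U]
  -- sandwich pointwise
  have hsand_lo : (∫ t in Ioi (0:ℝ), qlo δ (Real.exp (-s * t)) * f t) ≤ U f (1/s) := by
    rw [hUeq]
    apply setIntegral_mono_on hql_int hUind measurableSet_Ioi
    intro t ht
    have ht0 : (0:ℝ) < t := ht
    have hf0 := hf_nonneg t ht0
    rcases le_or_gt t (1/s) with hts | hts
    · rw [indicator_of_mem (mem_Ioc.2 ⟨ht0, hts⟩)]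
      nlinarith [qlo_le_one (δ := δ) (Real.exp (-s * t)), qlo_nonneg (δ := δ) (Real.exp (-s * t))]
    · have h1 : (1:ℝ) ≤ s * t := by
        rw [div_lt_iff₀ hs0] at hts
        nlinarith
      rw [qlo_zero hδ0 (Real.exp_le_exp.2 (by nlinarith)), zero_mul,
        indicator_of_notMem (fun h => absurd h.2 (not_le.2 hts))]
  have hsand_up : U f (1/s) ≤ ∫ t in Ioi (0:ℝ), qup δ (Real.exp (-s * t)) * f t := by
    rw [hUeq]
    apply setIntegral_mono_on hUind hqu_int measurableSet_Ioi
    intro t ht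
    have ht0 : (0:ℝ) < t := ht
    have hf0 := hf_nonneg t ht0
    rcases le_or_gt t (1/s) with hts | hts
    · have h1 : s * t ≤ 1 := by
        rw [le_div_iff₀ hs0] at hts
        nlinarith
      rw [indicator_of_mem (mem_Ioc.2 ⟨ht0, hts⟩),
        qup_one hδ0 (Real.exp_le_exp.2 (by nlinarith)), one_mul]
    · rw [indicator_of_notMem (fun h => absurd h.2 (not_le.2 hts))]
      exact mul_nonneg (qup_nonneg _) hf0
  -- approximation transfer
  have htrans : ∀ (q : ℝ → ℝ) (P : Polynomial ℝ),
      (∀ y ∈ Icc (0:ℝ) 1, |P.eval y - q y| ≤ (ε₀/4) * y) →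
      IntegrableOn (fun t => q (Real.exp (-s * t)) * f t) (Ioi 0) →
      IntegrableOn (fun t => P.eval (Real.exp (-s * t)) * f t) (Ioi 0) →
      |(∫ t in Ioi (0:ℝ), P.eval (Real.exp (-s * t)) * f t)
        - ∫ t in Ioi (0:ℝ), q (Real.exp (-s * t)) * f t| ≤ (ε₀/4) * om f s := by
    intro q P happ hq_int hP_int
    rw [← MeasureTheory.integral_sub hP_int hq_int]
    have habs : |∫ t in Ioi (0:ℝ), (P.eval (Real.exp (-s * t)) * f t
        - q (Real.exp (-s * t)) * f t)|
        ≤ ∫ t in Ioi (0:ℝ), |P.eval (Real.exp (-s * t)) * f t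
            - q (Real.exp (-s * t)) * f t| := by
      have hnorm := MeasureTheory.norm_integral_le_integral_norm
        (μ := volume.restrict (Ioi (0:ℝ)))
        (fun t => P.eval (Real.exp (-s * t)) * f t - q (Real.exp (-s * t)) * f t)
      simpa [Real.norm_eq_abs] using hnorm
    apply le_trans habs
    have : (ε₀/4) * om f s = ∫ t in Ioi (0:ℝ), (ε₀/4) * (Real.exp (-s * t) * f t) := by
      rw [MeasureTheory.integral_const_mul, om]
    rw [this]
    apply setIntegral_mono_on ((hP_int.sub hq_int).abs) (hint.const_mul _) measurableSet_Ioi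
    intro t ht
    have ht0 : (0:ℝ) < t := ht
    have hf0 := hf_nonneg t ht0
    have hy : Real.exp (-s * t) ∈ Icc (0:ℝ) 1 :=
      ⟨Real.exp_nonneg _, Real.exp_le_one_iff.2 (by nlinarith)⟩
    have h1 := happ _ hy
    simp only [Pi.sub_apply]
    rw [← sub_mul, abs_mul, abs_of_nonneg hf0]
    calc |P.eval (Real.exp (-s * t)) - q (Real.exp (-s * t))| * f t
        ≤ ((ε₀/4) * Real.exp (-s * t)) * f t :=
          mul_le_mul_of_nonneg_right h1 hf0
      _ = (ε₀/4) * (Real.exp (-s * t) * f t) := by ring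
  have hup_trans := htrans _ Pu hPuapp hqu_int hPu_int
  have hlo_trans := htrans _ Pl hPlapp hql_int hPl_int
  -- put it together
  have hU0 : 0 ≤ U f (1/s) := setIntegral_nonneg measurableSet_Ioc fun u hu => hf_nonneg u hu.1
  have hfrac_up : U f (1/s) / om f s < A + ε₀ := by
    have h1 : U f (1/s) ≤ (∫ t in Ioi (0:ℝ), Pu.eval (Real.exp (-s * t)) * f t)
        + (ε₀/4) * om f s := by
      have := (abs_le.1 hup_trans).1
      linarith
    have h2 : U f (1/s) / om f s
        ≤ (∫ t in Ioi (0:ℝ), Pu.eval (Real.exp (-s * t)) * f t) / om f s + ε₀/4 := by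
      have h2a : U f (1/s) / om f s
          ≤ ((∫ t in Ioi (0:ℝ), Pu.eval (Real.exp (-s * t)) * f t) + (ε₀/4) * om f s)
            / om f s := by gcongr
      rw [add_div, mul_div_cancel_right₀ _ hom.ne'] at h2a
      exact h2a
    calc U f (1/s) / om f s
        ≤ (∫ t in Ioi (0:ℝ), Pu.eval (Real.exp (-s * t)) * f t) / om f s + ε₀/4 := h2
      _ < (Mval ρ Pu + ε₀/4) + ε₀/4 := by linarith
      _ ≤ ((1+δ) ^ ρ / Real.Gamma (ρ+1) + ε₀/4) + ε₀/4 + ε₀/4 := by linarith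
      _ < A + ε₀ := by linarith
  have hfrac_lo : A - ε₀ < U f (1/s) / om f s := by
    have h1 : (∫ t in Ioi (0:ℝ), Pl.eval (Real.exp (-s * t)) * f t)
        - (ε₀/4) * om f s ≤ U f (1/s) := by
      have := (abs_le.1 hlo_trans).2
      linarith
    have h2 : (∫ t in Ioi (0:ℝ), Pl.eval (Real.exp (-s * t)) * f t) / om f s - ε₀/4
        ≤ U f (1/s) / om f s := by
      have h2a : ((∫ t in Ioi (0:ℝ), Pl.eval (Real.exp (-s * t)) * f t) - (ε₀/4) * om f s)
          / om f s ≤ U f (1/s) / om f s := by gcongr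
      rw [sub_div, mul_div_cancel_right₀ _ hom.ne'] at h2a
      exact h2a
    calc A - ε₀ < (1-δ) ^ ρ / Real.Gamma (ρ+1) - ε₀/4 - ε₀/4 - ε₀/4 := by linarith
      _ ≤ Mval ρ Pl - ε₀/4 - ε₀/4 := by linarith
      _ < (∫ t in Ioi (0:ℝ), Pl.eval (Real.exp (-s * t)) * f t) / om f s - ε₀/4 := by linarith
      _ ≤ U f (1/s) / om f s := h2
  rw [Real.dist_eq, abs_lt]
  constructor <;> [linarith; linarith]


end KaramataAux


open KaramataAux in
/-- Karamata's Tauberian theorem: for a nonnegative measurable `f`, `ρ ≥ 0`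
and `L` positive on `(0,∞)` and slowly varying at infinity, the Laplace
transform `∫₀^∞ e^{-st} f(t) dt` is asymptotic to `s^{-ρ} L(1/s)` as `s → 0⁺`
iff `∫₀^t f(u) du` is asymptotic to `t^ρ L(t) / Γ(ρ+1)` as `t → ∞`. -/
theorem karamata_tauberian
    (f : ℝ → ℝ) (hf_meas : Measurable f) (hf_nonneg : ∀ t, 0 ≤ t → 0 ≤ f t)
    (ρ : ℝ) (hρ : 0 ≤ ρ)
    (L : ℝ → ℝ) (hL_pos : ∀ t, 0 < t → 0 < L t)
    (hL_slow : ∀ c : ℝ, 0 < c →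
      Tendsto (fun t => L (c * t) / L t) atTop (nhds 1)) :
    Tendsto
      (fun s : ℝ => (∫ t in Ioi (0:ℝ), Real.exp (-s * t) * f t) / (s ^ (-ρ) * L (1 / s)))
      (nhdsWithin 0 (Ioi 0)) (nhds 1)
    ↔
    Tendsto
      (fun t : ℝ => (∫ u in (0:ℝ)..t, f u) / (t ^ ρ * L t / Real.Gamma (ρ + 1)))
      atTop (nhds 1) := by
  have hf_nonneg' : ∀ t, 0 < t → 0 ≤ f t := fun t ht => hf_nonneg t ht.le
  have hΓ : 0 < Real.Gamma (ρ + 1) := Real.Gamma_pos_of_pos (by linarith)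
  constructor
  · -- Tauberian direction
    intro hLHS
    have hUratio := tauberian_U_ratio hf_meas hf_nonneg' hρ hL_pos hL_slow hLHS
    have hinv' : Tendsto (fun t : ℝ => 1 / t) atTop (nhdsWithin (0:ℝ) (Ioi 0)) := by
      simpa [one_div] using tendsto_inv_atTop_nhdsGT_zero (𝕜 := ℝ)
    have h1 : Tendsto (fun t : ℝ => U f (1/(1/t)) / om f (1/t)) atTop
        (𝓝 (1 / Real.Gamma (ρ+1))) := hUratio.comp hinv'
    have h2 : Tendsto (fun t : ℝ => om f (1/t) / ((1/t) ^ (-ρ) * L (1/(1/t)))) atTop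
        (𝓝 1) := hLHS.comp hinv'
    have h3 := (h1.mul h2).mul_const (Real.Gamma (ρ+1))
    rw [mul_one, one_div, inv_mul_cancel₀ hΓ.ne'] at h3
    apply h3.congr'
    filter_upwards [eventually_gt_atTop (0:ℝ), hinv'.eventually
      (eventually_om_pos hf_meas hf_nonneg' hρ hL_pos hLHS)] with t ht0 homt
    have htt : 1/(1/t) = t := one_div_one_div t
    have hom : 0 < om f (1/t) := homt.1
    have hLt : 0 < L t := hL_pos t ht0
    have htρ : (0:ℝ) < t ^ ρ := Real.rpow_pos_of_pos ht0 _
    have hrw : (1/t) ^ (-ρ) = t ^ ρ := by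
      rw [one_div, ← Real.rpow_neg_one t, ← Real.rpow_mul ht0.le]
      rw [show (-1) * -ρ = ρ by ring]
    rw [htt, hrw, interval_eq_U ht0.le]
    field_simp
  · -- Abelian direction
    intro hRHS
    apply abelian hf_meas hf_nonneg' hρ hL_pos hL_slow
    apply hRHS.congr'
    filter_upwards [eventually_ge_atTop (0:ℝ)] with t ht
    rw [interval_eq_U ht]
end

section
/- Let (Pₙ)ₙ≥₁ be a sequence of continuously differentiable functions Pₙ : [0,∞) → [0,1] with Σₙ Pₙ(t) ≤ 1 for all t, satisfying the system of differential equations P₁′(t) = 2P₂(t), P₂′(t) = −4P₂(t) + 3P₃(t), and Pₙ′(t) = −2nPₙ(t) + (n+1)Pₙ₊₁(t) + (n−1)Pₙ₋₁(t) for all n ≥ 3, with initial conditions P₂(0) = 1 and Pₙ(0) = 0 for all n ≠ 2. Then P₁ satisfies the renewal equation P₁(t) = 2t/(1+t)³ + ∫₀ᵗ 2/(1+(t−y))³ · P₁(y) dy for all t ≥ 0. -/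
open MeasureTheory Filter Set intervalIntegral
open Topology

/-- The dual weight functions `gg k u = (k+1) u^k / (1+u)^(k+2)`, which solve the
backward system associated to the forward Kolmogorov system. -/
noncomputable def gg (k : ℕ) (u : ℝ) : ℝ := ((k:ℝ)+1) * u^k / (1+u)^(k+2)

lemma gg_deriv0 {u : ℝ} (hu : (0:ℝ) ≤ u) :
    HasDerivAt (gg 0) (-2 / (1+u)^3) u := by
  have h1 : (1+u) ≠ 0 := by positivity
  have h := (hasDerivAt_const u (1:ℝ)).fun_div
    (((hasDerivAt_id u).const_add 1).fun_pow 2) (by positivity)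
  convert h using 1
  any_goals rfl
  · ext x; simp [gg]
  · simp only [id]; field_simp; ring

lemma gg_deriv (k : ℕ) {u : ℝ} (hu : (0:ℝ) ≤ u) :
    HasDerivAt (gg (k+1))
      (-(2*((k:ℝ)+2)) * gg (k+1) u + ((k:ℝ)+2) * gg k u + ((k:ℝ)+2) * gg (k+2) u) u := by
  have h1 : (1+u) ≠ 0 := by positivity
  have hnum : HasDerivAt (fun x : ℝ => ((k:ℝ)+2) * x^(k+1))
      (((k:ℝ)+2) * (((k:ℕ)+1 : ℕ) * u^k)) u := by
    simpa using ((hasDerivAt_pow (k+1) u).const_mul ((k:ℝ)+2))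
  have hden : HasDerivAt (fun x : ℝ => (1+x)^(k+3))
      ((((k:ℕ)+3 : ℕ):ℝ) * (1+u)^(k+2)) u := by
    simpa using (((hasDerivAt_id u).const_add 1).fun_pow (k+3))
  have h := hnum.fun_div hden (by positivity)
  have heq : gg (k+1) = fun x : ℝ => ((k:ℝ)+2) * x^(k+1) / (1+x)^(k+3) := by
    ext x; simp only [gg]; push_cast; ring_nf
  rw [heq]
  convert h using 1
  any_goals rfl
  simp only [gg]; push_cast; field_simp; ring

lemma gg_contAt (k : ℕ) {u : ℝ} (hu : (0:ℝ) ≤ u) : ContinuousAt (gg k) u := by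
  have h1 : ((1:ℝ)+u)^(k+2) ≠ 0 := by positivity
  exact (continuousAt_const.mul (continuousAt_pow _ _)).div
    (ContinuousAt.pow (continuousAt_const.add continuousAt_id) _) h1

lemma gg_nonneg (k : ℕ) {u : ℝ} (hu : (0:ℝ) ≤ u) : 0 ≤ gg k u := by
  unfold gg; positivity

lemma gg_le (k : ℕ) {u T : ℝ} (hu : (0:ℝ) ≤ u) (huT : u ≤ T) :
    gg k u ≤ ((k:ℝ)+1) * (T/(1+T))^k := by
  have hT : (0:ℝ) ≤ T := le_trans hu huT
  have h1u : (0:ℝ) < 1+u := by linarith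
  have h1T : (0:ℝ) < 1+T := by linarith
  have hq : u/(1+u) ≤ T/(1+T) := by
    rw [div_le_div_iff₀ h1u h1T]; nlinarith
  have hq0 : (0:ℝ) ≤ u/(1+u) := by positivity
  calc gg k u ≤ ((k:ℝ)+1) * u^k / (1+u)^k := by
        unfold gg
        gcongr
        · linarith
        · omega
    _ = ((k:ℝ)+1) * (u/(1+u))^k := by rw [div_pow]; ring
    _ ≤ ((k:ℝ)+1) * (T/(1+T))^k := by
        gcongr ((k:ℝ)+1) * ?_ ^ k

lemma sum_deriv (P : ℕ → ℝ → ℝ) (T : ℝ)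
    (hP1' : ∀ t, 0 ≤ t → HasDerivWithinAt (P 1) (2 * P 2 t) (Ici 0) t)
    (hP2' : ∀ t, 0 ≤ t → HasDerivWithinAt (P 2) (-4 * P 2 t + 3 * P 3 t) (Ici 0) t)
    (hPn' : ∀ n : ℕ, 3 ≤ n → ∀ t, 0 ≤ t → HasDerivWithinAt (P n)
      (-(2 * n) * P n t + (n + 1) * P (n + 1) t + (n - 1) * P (n - 1) t) (Ici 0) t)
    (M : ℕ) {t : ℝ} (ht0 : 0 ≤ t) (htT : t ≤ T) :
    HasDerivWithinAt (fun s => ∑ k ∈ Finset.range (M+2), gg k (T-s) * P (k+1) s)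
      (2/(1+(T-t))^3 * P 1 t + ((M:ℝ)+3) * gg (M+1) (T-t) * P (M+3) t
        - ((M:ℝ)+2) * gg (M+2) (T-t) * P (M+2) t) (Ici 0) t := by
  have hu : (0:ℝ) ≤ T - t := by linarith
  have hin : HasDerivAt (fun s : ℝ => T - s) (-1) t := (hasDerivAt_id t).const_sub T
  have hcomp : ∀ (k : ℕ) (d : ℝ), HasDerivAt (gg k) d (T - t) →
      HasDerivWithinAt (fun s => gg k (T - s)) (d * (-1)) (Ici 0) t := by
    intro k d hd
    exact (hd.comp t hin).hasDerivWithinAt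
  induction M with
  | zero =>
      have term1 := (hcomp 0 _ (gg_deriv0 hu)).fun_mul (hP1' t ht0)
      have term2 := (hcomp 1 _ (gg_deriv 0 hu)).fun_mul (hP2' t ht0)
      have h := term1.fun_add term2
      simp only [Finset.sum_range_succ, Finset.sum_range_zero, zero_add]
      convert h using 1
      any_goals rfl
      push_cast
      ring
  | succ M ih =>
      have hsplit : M + 1 + 2 = (M + 2) + 1 := by omega
      rw [hsplit]
      have hfun : (fun s => ∑ k ∈ Finset.range ((M+2)+1), gg k (T-s) * P (k+1) s)
          = fun s => (∑ k ∈ Finset.range (M+2), gg k (T-s) * P (k+1) s)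
              + gg (M+2) (T-s) * P (M+3) s := by
        funext s
        rw [Finset.sum_range_succ, show M+2+1 = M+3 from by omega]
      rw [hfun]
      have hd := hPn' (M+3) (by omega) t ht0
      rw [show M+3+1 = M+4 from by omega, show M+3-1 = M+2 from by omega] at hd
      have term := (hcomp (M+2) _ (gg_deriv (M+1) hu)).fun_mul hd
      rw [show M+1+1 = M+2 from by omega, show M+1+2 = M+3 from by omega] at term
      simp only [show M+1+1 = M+2 from by omega, show M+1+2 = M+3 from by omega,
        show M+1+3 = M+4 from by omega, show M+2+1 = M+3 from by omega]
      have h := ih.fun_add term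
      convert h using 1
      any_goals rfl
      push_cast
      ring

/-- If `(Pₙ)ₙ≥₁` is a sequence of continuously differentiable functions with
values in `[0,1]`, total mass at most `1`, satisfying the forward Kolmogorov
system `P₁′ = 2P₂`, `P₂′ = -4P₂ + 3P₃`, `Pₙ′ = -2nPₙ + (n+1)Pₙ₊₁ + (n-1)Pₙ₋₁`
for `n ≥ 3`, with `P₂(0) = 1` and `Pₙ(0) = 0` for `n ≠ 2`, then `P₁` satisfies
the renewal equation `P₁(t) = 2t/(1+t)³ + ∫₀ᵗ 2/(1+(t-y))³ P₁(y) dy`. -/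
theorem renewal_equation_of_kolmogorov_system
    (P : ℕ → ℝ → ℝ)
    (hsmooth : ∀ n, 1 ≤ n → ContDiffOn ℝ 1 (P n) (Ici 0))
    (hrange : ∀ n, 1 ≤ n → ∀ t, 0 ≤ t → P n t ∈ Icc (0:ℝ) 1)
    (hsum : ∀ t, 0 ≤ t → ∀ S : Finset ℕ,
      (∑ n ∈ S.filter (fun n => 1 ≤ n), P n t) ≤ 1)
    (hP1' : ∀ t, 0 ≤ t → HasDerivWithinAt (P 1) (2 * P 2 t) (Ici 0) t)
    (hP2' : ∀ t, 0 ≤ t → HasDerivWithinAt (P 2) (-4 * P 2 t + 3 * P 3 t) (Ici 0) t)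
    (hPn' : ∀ n, 3 ≤ n → ∀ t, 0 ≤ t → HasDerivWithinAt (P n)
      (-(2 * n) * P n t + (n + 1) * P (n + 1) t + (n - 1) * P (n - 1) t) (Ici 0) t)
    (hinit2 : P 2 0 = 1)
    (hinit : ∀ n, 1 ≤ n → n ≠ 2 → P n 0 = 0) :
    ∀ t, 0 ≤ t →
      P 1 t = 2 * t / (1 + t) ^ 3
        + ∫ y in (0:ℝ)..t, 2 / (1 + (t - y)) ^ 3 * P 1 y := by
  intro T hT
  rcases eq_or_lt_of_le hT with h0 | hTpos
  · -- T = 0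
    rw [← h0]
    simp [intervalIntegral.integral_same, hinit 1 le_rfl (by norm_num)]
  set r : ℝ := T / (1 + T) with hr_def
  have h1T : (0:ℝ) < 1 + T := by linarith
  have hr0 : (0:ℝ) ≤ r := by positivity
  have hrpos : (0:ℝ) < r := by rw [hr_def]; positivity
  have hr1 : r < 1 := by rw [hr_def, div_lt_one h1T]; linarith
  -- continuity facts
  have hPc : ∀ n, 1 ≤ n → ContinuousOn (P n) (Icc 0 T) :=
    fun n hn => ((hsmooth n hn).continuousOn).mono (fun x hx => hx.1)
  have hgc : ∀ k : ℕ, ContinuousOn (fun t => gg k (T - t)) (Icc 0 T) := by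
    intro k t ht
    have h0 : (0:ℝ) ≤ T - t := by linarith [ht.2]
    exact ((gg_contAt k h0).comp
      ((continuous_const.sub continuous_id).continuousAt)).continuousWithinAt
  have hAc : ContinuousOn (fun t => 2/(1+(T-t))^3 * P 1 t) (Icc 0 T) := by
    apply ContinuousOn.mul _ (hPc 1 le_rfl)
    intro t ht
    have h0 : (0:ℝ) ≤ T - t := by linarith [ht.2]
    have hne : ((1:ℝ)+(T-t))^3 ≠ 0 := by positivity
    exact ((continuousAt_const.div
      (ContinuousAt.pow ((continuous_const.sub continuous_id).continuousAt.const_add 1) 3)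
      hne).continuousWithinAt :)
  -- the key identity for each truncation level M
  have key : ∀ M : ℕ,
      P 1 T - 2 * T / (1 + T) ^ 3 - (∫ y in (0:ℝ)..T, 2 / (1 + (T - y)) ^ 3 * P 1 y)
        = ∫ t in (0:ℝ)..T, (((M:ℝ)+3) * gg (M+1) (T-t) * P (M+3) t
            - ((M:ℝ)+2) * gg (M+2) (T-t) * P (M+2) t) := by
    intro M
    set W : ℝ → ℝ := fun s => ∑ k ∈ Finset.range (M+2), gg k (T-s) * P (k+1) s with hW
    have hWc : ContinuousOn W (Icc 0 T) := by
      apply continuousOn_finset_sum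
      intro k _
      exact (hgc k).mul (hPc (k+1) (by omega))
    have hEc : ContinuousOn (fun t => ((M:ℝ)+3) * gg (M+1) (T-t) * P (M+3) t
        - ((M:ℝ)+2) * gg (M+2) (T-t) * P (M+2) t) (Icc 0 T) := by
      apply ContinuousOn.sub
      · exact (continuousOn_const.mul (hgc (M+1))).mul (hPc (M+3) (by omega))
      · exact (continuousOn_const.mul (hgc (M+2))).mul (hPc (M+2) (by omega))
    have hDc : ContinuousOn (fun t => 2/(1+(T-t))^3 * P 1 t
        + (((M:ℝ)+3) * gg (M+1) (T-t) * P (M+3) t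
          - ((M:ℝ)+2) * gg (M+2) (T-t) * P (M+2) t)) (Icc 0 T) := hAc.add hEc
    have hderiv : ∀ t ∈ Ioo (0:ℝ) T, HasDerivWithinAt W
        (2/(1+(T-t))^3 * P 1 t + (((M:ℝ)+3) * gg (M+1) (T-t) * P (M+3) t
          - ((M:ℝ)+2) * gg (M+2) (T-t) * P (M+2) t)) (Ioi t) t := by
      intro t ht
      have h := sum_deriv P T hP1' hP2' hPn' M (le_of_lt ht.1) (le_of_lt ht.2)
      have h' := (h.hasDerivAt (Ici_mem_nhds ht.1)).hasDerivWithinAt (s := Ioi t)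
      convert h' using 1
      any_goals rfl
      ring
    have hint : IntervalIntegrable (fun t => 2/(1+(T-t))^3 * P 1 t
        + (((M:ℝ)+3) * gg (M+1) (T-t) * P (M+3) t
          - ((M:ℝ)+2) * gg (M+2) (T-t) * P (M+2) t)) volume 0 T := by
      apply ContinuousOn.intervalIntegrable
      rwa [uIcc_of_le hT]
    have hFTC := intervalIntegral.integral_eq_sub_of_hasDeriv_right_of_le hT hWc hderiv hint
    have hintA : IntervalIntegrable (fun t => 2/(1+(T-t))^3 * P 1 t) volume 0 T := by
      apply ContinuousOn.intervalIntegrable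
      rwa [uIcc_of_le hT]
    have hintE : IntervalIntegrable (fun t => ((M:ℝ)+3) * gg (M+1) (T-t) * P (M+3) t
        - ((M:ℝ)+2) * gg (M+2) (T-t) * P (M+2) t) volume 0 T := by
      apply ContinuousOn.intervalIntegrable
      rwa [uIcc_of_le hT]
    rw [intervalIntegral.integral_add hintA hintE] at hFTC
    -- endpoint evaluations
    have hWT : W T = P 1 T := by
      rw [hW]
      simp only [sub_self]
      rw [Finset.sum_eq_single_of_mem 0 (Finset.mem_range.mpr (by omega))]
      · norm_num [gg]
      · intro b _ hb
        simp [gg, zero_pow hb]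
    have hW0 : W 0 = 2 * T / (1 + T) ^ 3 := by
      rw [hW]
      simp only [sub_zero]
      rw [Finset.sum_eq_single_of_mem 1 (Finset.mem_range.mpr (by omega))]
      · rw [hinit2]
        norm_num [gg]
      · intro b _ hb
        rw [hinit (b+1) (by omega) (by omega)]
        ring
    rw [hWT, hW0] at hFTC
    linarith [hFTC]
  -- the error bound
  have habs : ∀ M : ℕ,
      |P 1 T - 2 * T / (1 + T) ^ 3 - (∫ y in (0:ℝ)..T, 2 / (1 + (T - y)) ^ 3 * P 1 y)|
        ≤ (2*((M:ℝ)+4)^2 * r^(M+1)) * T := by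
    intro M
    rw [key M]
    have hpt : ∀ t ∈ Set.uIoc (0:ℝ) T,
        ‖((M:ℝ)+3) * gg (M+1) (T-t) * P (M+3) t
          - ((M:ℝ)+2) * gg (M+2) (T-t) * P (M+2) t‖ ≤ 2*((M:ℝ)+4)^2 * r^(M+1) := by
      intro t ht
      rw [uIoc_of_le hT] at ht
      have ht0 : (0:ℝ) ≤ t := le_of_lt ht.1
      have hu0 : (0:ℝ) ≤ T - t := by linarith [ht.2]
      have huT : T - t ≤ T := by linarith
      have g1 := gg_le (M+1) hu0 huT
      have g2 := gg_le (M+2) hu0 huT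
      rw [← hr_def] at g1 g2
      push_cast at g1 g2
      have gn1 := gg_nonneg (M+1) hu0
      have gn2 := gg_nonneg (M+2) hu0
      have p1 := hrange (M+3) (by omega) t ht0
      have p2 := hrange (M+2) (by omega) t ht0
      have hrn : (0:ℝ) ≤ r^(M+1) := pow_nonneg hr0 _
      have hrn2 : (0:ℝ) ≤ r^(M+2) := pow_nonneg hr0 _
      have hrM : r^(M+2) ≤ r^(M+1) := by
        rw [pow_succ]
        nlinarith
      have hM0 : (0:ℝ) ≤ (M:ℝ) := Nat.cast_nonneg M
      have hX0 : 0 ≤ ((M:ℝ)+3) * gg (M+1) (T-t) * P (M+3) t :=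
        mul_nonneg (mul_nonneg (by linarith) gn1) p1.1
      have hY0 : 0 ≤ ((M:ℝ)+2) * gg (M+2) (T-t) * P (M+2) t :=
        mul_nonneg (mul_nonneg (by linarith) gn2) p2.1
      have hXle : ((M:ℝ)+3) * gg (M+1) (T-t) * P (M+3) t
          ≤ ((M:ℝ)+3) * (((M:ℝ)+2) * r^(M+1)) := by
        have h1 : gg (M+1) (T-t) * P (M+3) t ≤ (((M:ℝ)+1+1) * r^(M+1)) * 1 :=
          mul_le_mul g1 p1.2 p1.1 (by positivity)
        have h2 := mul_le_mul_of_nonneg_left h1 (show (0:ℝ) ≤ (M:ℝ)+3 by linarith)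
        nlinarith [h2]
      have hYle : ((M:ℝ)+2) * gg (M+2) (T-t) * P (M+2) t
          ≤ ((M:ℝ)+2) * (((M:ℝ)+3) * r^(M+2)) := by
        have h1 : gg (M+2) (T-t) * P (M+2) t ≤ (((M:ℝ)+2+1) * r^(M+2)) * 1 :=
          mul_le_mul g2 p2.2 p2.1 (by positivity)
        have h2 := mul_le_mul_of_nonneg_left h1 (show (0:ℝ) ≤ (M:ℝ)+2 by linarith)
        nlinarith [h2]
      rw [Real.norm_eq_abs]
      apply abs_le.mpr
      constructor
      · nlinarith [hYle, hX0, hrM, hrn, hM0]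
      · nlinarith [hXle, hY0, hrn, hM0]
    have hb := intervalIntegral.norm_integral_le_of_norm_le_const hpt
    rw [Real.norm_eq_abs, sub_zero, abs_of_nonneg hT] at hb
    exact hb
  -- pass to the limit M → ∞
  have hrne : r ≠ 0 := ne_of_gt hrpos
  have htend : Tendsto (fun M : ℕ => (2*((M:ℝ)+4)^2 * r^(M+1)) * T) atTop (𝓝 0) := by
    have h := (tendsto_pow_const_mul_const_pow_of_lt_one 2 hr0 hr1).comp
      (tendsto_add_atTop_nat 4)
    have h2 := h.const_mul (2*T/r^3)
    rw [mul_zero] at h2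
    apply h2.congr
    intro M
    simp only [Function.comp]
    push_cast
    field_simp
    ring
  have hle0 : |P 1 T - 2 * T / (1 + T) ^ 3
      - (∫ y in (0:ℝ)..T, 2 / (1 + (T - y)) ^ 3 * P 1 y)| ≤ 0 :=
    ge_of_tendsto' htend habs
  have hzero := abs_eq_zero.mp (le_antisymm hle0 (abs_nonneg _))
  linarith [hzero]
end

section
/- Let P(s,t) be continuously differentiable in both variables for s ∈ [0,1), t ≥ 0, satisfying the partial differential equation ∂P/∂t (s,t) = −(s−1)² P₁(t) + (s−1)² ∂P/∂s (s,t) with initial condition P(s,0) = s², where P₁(t) = limit of ∂P/∂s(s,t) as s → 0 (equivalently P₁ is a given continuous function appearing in the PDE). Then for all s ∈ [0,1) and t ≥ 0: P(s,t) − ((s − (s−1)t)/(1 − t(s−1)))² = ∫₀ᵗ −1/(y − t + 1/(s−1))² · P₁(y) dy. -/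
open MeasureTheory Filter Set

/-- Solution by characteristics of the inhomogeneous transport equation
`∂P/∂t = -(s-1)² P₁(t) + (s-1)² ∂P/∂s` with `P(s,0) = s²`:
`P(s,t) - ((s-(s-1)t)/(1-t(s-1)))² = ∫₀ᵗ -1/(y-t+1/(s-1))² P₁(y) dy`. -/
theorem transport_pde_characteristics
    (P : ℝ → ℝ → ℝ) (P₁ : ℝ → ℝ)
    (hP₁_cont : ContinuousOn P₁ (Ici 0))
    (hP₁_range : ∀ t, 0 ≤ t → P₁ t ∈ Icc (0:ℝ) 1)
    (hP_smooth : ContDiffOn ℝ 1 (fun p : ℝ × ℝ => P p.1 p.2) (Ico 0 1 ×ˢ Ici 0))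
    (hPDE : ∀ s ∈ Ico (0:ℝ) 1, ∀ t, 0 ≤ t →
      deriv (fun τ => P s τ) t
        = -(s - 1) ^ 2 * P₁ t + (s - 1) ^ 2 * deriv (fun σ => P σ t) s)
    (hinit : ∀ s ∈ Ico (0:ℝ) 1, P s 0 = s ^ 2) :
    ∀ s ∈ Ico (0:ℝ) 1, ∀ t, 0 ≤ t →
      P s t - ((s - (s - 1) * t) / (1 - t * (s - 1))) ^ 2
        = ∫ y in (0:ℝ)..t, (-1) / (y - t + 1 / (s - 1)) ^ 2 * P₁ y := by
  intro s hs t ht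
  obtain ⟨hs0, hs1⟩ := hs
  have hs1' : s - 1 < 0 := by linarith
  have hs1ne : s - 1 ≠ 0 := ne_of_lt hs1'
  set c : ℝ := (s - 1)⁻¹ with hc
  have hcs : c * (s - 1) = 1 := inv_mul_cancel₀ hs1ne
  have hcneg : c ≤ -1 := by nlinarith [hcs]
  -- the characteristic curve
  set σ : ℝ → ℝ := fun y => 1 + (y - t + c)⁻¹ with hσdef
  set g : ℝ → ℝ := fun y => P (σ y) y with hgdef
  -- basic denominator facts
  have hden_le : ∀ y ∈ Icc (0:ℝ) t, y - t + c ≤ -1 := fun y hy => by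
    have := hy.2; linarith
  have hden_lt : ∀ y ∈ Ioo (0:ℝ) t, y - t + c < -1 := fun y hy => by
    have := hy.2; linarith
  have hσmem : ∀ y ∈ Icc (0:ℝ) t, σ y ∈ Ico (0:ℝ) 1 := by
    intro y hy
    have h1 : y - t + c ≤ -1 := hden_le y hy
    have h0 : y - t + c < 0 := by linarith
    have hinv : (y - t + c)⁻¹ * (y - t + c) = 1 := inv_mul_cancel₀ (ne_of_lt h0)
    have hn : (y - t + c)⁻¹ < 0 := inv_lt_zero.mpr h0
    constructor
    · have : -1 ≤ (y - t + c)⁻¹ := by nlinarith [hinv]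
      simp only [hσdef]; linarith
    · simp only [hσdef]; linarith
  have hσmem' : ∀ y ∈ Ioo (0:ℝ) t, σ y ∈ Ioo (0:ℝ) 1 := by
    intro y hy
    have h1 : y - t + c < -1 := hden_lt y hy
    have h0 : y - t + c < 0 := by linarith
    have hinv : (y - t + c)⁻¹ * (y - t + c) = 1 := inv_mul_cancel₀ (ne_of_lt h0)
    have hn : (y - t + c)⁻¹ < 0 := inv_lt_zero.mpr h0
    constructor
    · have : -1 < (y - t + c)⁻¹ := by nlinarith [hinv]
      simp only [hσdef]; linarith
    · simp only [hσdef]; linarith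
  -- derivative of g on the open interval
  have hderiv : ∀ y ∈ Ioo (0:ℝ) t, HasDerivAt g ((-1) / (y - t + c) ^ 2 * P₁ y) y := by
    intro y hy
    have h1 : y - t + c < -1 := hden_lt y hy
    have h0 : y - t + c < 0 := by linarith
    have hdne : y - t + c ≠ 0 := ne_of_lt h0
    have hx : σ y ∈ Ioo (0:ℝ) 1 := hσmem' y hy
    -- the point is interior
    have hnhds : (Ico (0:ℝ) 1 ×ˢ Ici (0:ℝ) : Set (ℝ × ℝ)) ∈ nhds (σ y, y) := by
      refine Filter.mem_of_superset
        ((isOpen_Ioo.prod isOpen_Ioi).mem_nhds ⟨hx, hy.1⟩) ?_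
      exact Set.prod_mono Ioo_subset_Ico_self Ioi_subset_Ici_self
    have hdiffAt : DifferentiableAt ℝ (fun p : ℝ × ℝ => P p.1 p.2) (σ y, y) :=
      (hP_smooth.contDiffAt hnhds).differentiableAt one_ne_zero
    set L := fderiv ℝ (fun p : ℝ × ℝ => P p.1 p.2) (σ y, y) with hL
    have hF : HasFDerivAt (fun p : ℝ × ℝ => P p.1 p.2) L (σ y, y) := hdiffAt.hasFDerivAt
    -- partial derivatives
    have hcurve1 : HasDerivAt (fun u : ℝ => (u, y)) ((1:ℝ), (0:ℝ)) (σ y) :=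
      (hasDerivAt_id (σ y)).prodMk (hasDerivAt_const (σ y) y)
    have hpx : HasDerivAt (fun u => P u y) (L (1, 0)) (σ y) := by
      have := hF.comp_hasDerivAt (σ y) hcurve1
      exact this
    have hcurve2 : HasDerivAt (fun τ : ℝ => (σ y, τ)) ((0:ℝ), (1:ℝ)) y :=
      (hasDerivAt_const y (σ y)).prodMk (hasDerivAt_id y)
    have hpt : HasDerivAt (fun τ => P (σ y) τ) (L (0, 1)) y := by
      have := hF.comp_hasDerivAt y hcurve2
      exact this
    -- the PDE at this point
    have hpde := hPDE (σ y) ⟨hx.1.le, hx.2⟩ y hy.1.le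
    rw [hpt.deriv, hpx.deriv] at hpde
    -- derivative of σ
    have hd1 : HasDerivAt (fun z : ℝ => z - t + c) 1 y := by
      simpa using ((hasDerivAt_id y).sub_const t).add_const c
    have hσd : HasDerivAt σ (-1 / (y - t + c) ^ 2) y := by
      have := (hd1.inv hdne).const_add 1
      simpa [hσdef] using this
    -- chain rule
    have hcurve : HasDerivAt (fun z : ℝ => (σ z, z)) ((-1 / (y - t + c) ^ 2, (1:ℝ))) y :=
      hσd.prodMk (hasDerivAt_id y)
    have hg' : HasDerivAt ((fun p : ℝ × ℝ => P p.1 p.2) ∘ (fun z : ℝ => (σ z, z)))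
        (L (-1 / (y - t + c) ^ 2, 1)) y :=
      hF.comp_hasDerivAt_of_eq y hcurve rfl
    have hg : HasDerivAt g (L (-1 / (y - t + c) ^ 2, 1)) y := hg'
    have hsplit : L (-1 / (y - t + c) ^ 2, 1)
        = -1 / (y - t + c) ^ 2 * L (1, 0) + L (0, 1) := by
      have hvec : ((-1 / (y - t + c) ^ 2, (1:ℝ)) : ℝ × ℝ)
          = (-1 / (y - t + c) ^ 2) • ((1:ℝ), (0:ℝ)) + ((0:ℝ), (1:ℝ)) := by
        simp [Prod.ext_iff]
      rw [hvec, map_add, L.map_smul, smul_eq_mul]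
    have hsq : (σ y - 1) ^ 2 = 1 / (y - t + c) ^ 2 := by
      simp only [hσdef]
      field_simp
      ring
    rw [hsplit, hpde, hsq] at hg
    have : -1 / (y - t + c) ^ 2 * L (1, 0)
        + (-(1 / (y - t + c) ^ 2) * P₁ y + 1 / (y - t + c) ^ 2 * L (1, 0))
        = (-1) / (y - t + c) ^ 2 * P₁ y := by ring
    rwa [this] at hg
  -- continuity of g on [0, t]
  have hσcont : ContinuousOn (fun y => (σ y, y)) (Icc (0:ℝ) t) := by
    apply ContinuousOn.prodMk _ continuousOn_id
    apply ContinuousOn.add continuousOn_const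
    apply ContinuousOn.inv₀
    · exact ((continuousOn_id.sub continuousOn_const).add continuousOn_const)
    · intro y hy
      have := hden_le y hy
      intro h; rw [h] at this; norm_num at this
  have hgcont : ContinuousOn g (Icc 0 t) := by
    apply hP_smooth.continuousOn.comp hσcont
    intro y hy
    exact ⟨hσmem y hy, hy.1⟩
  -- integrability of the integrand
  have hint : IntervalIntegrable (fun y => (-1) / (y - t + c) ^ 2 * P₁ y) volume 0 t := by
    apply ContinuousOn.intervalIntegrable_of_Icc ht
    apply ContinuousOn.mul
    · apply ContinuousOn.div continuousOn_const
      · exact (((continuousOn_id.sub continuousOn_const).add continuousOn_const).pow 2)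
      · intro y hy
        have h1 := hden_le y hy
        exact pow_ne_zero 2 (by linarith : y - t + c ≠ 0)
    · exact hP₁_cont.mono (fun y hy => hy.1)
  -- fundamental theorem of calculus
  have hFTC : ∫ y in (0:ℝ)..t, (-1) / (y - t + c) ^ 2 * P₁ y = g t - g 0 :=
    intervalIntegral.integral_eq_sub_of_hasDeriv_right_of_le ht hgcont
      (fun y hy => (hderiv y hy).hasDerivWithinAt) hint
  -- evaluate g t and g 0
  have hgt : g t = P s t := by
    have hcc : t - t + c = c := by ring
    have : σ t = s := by
      simp only [hσdef, hcc]; rw [hc, inv_inv]; ring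
    simp only [hgdef, this]
  have hσ0mem : σ 0 ∈ Ico (0:ℝ) 1 := hσmem 0 ⟨le_refl 0, ht⟩
  have hg0 : g 0 = ((s - (s - 1) * t) / (1 - t * (s - 1))) ^ 2 := by
    have h1 : (0:ℝ) - t + c < 0 := by linarith [hcneg]
    have hne : (0:ℝ) - t + c ≠ 0 := ne_of_lt h1
    have htne : 1 - t * (s - 1) ≠ 0 := by nlinarith [mul_nonneg ht (neg_nonneg.mpr hs1'.le)]
    have hσ0 : σ 0 = (s - (s - 1) * t) / (1 - t * (s - 1)) := by
      have hrw : (0:ℝ) - t + c = (1 - t * (s - 1)) / (s - 1) := by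
        rw [hc]; field_simp; ring
      simp only [hσdef, hrw, inv_div]
      rw [eq_div_iff htne, add_mul, div_mul_cancel₀ _ htne]
      ring
    rw [hgdef]
    simp only
    rw [hinit (σ 0) hσ0mem, hσ0]
  -- put it together
  have hcongr : ∀ y : ℝ, (-1) / (y - t + 1 / (s - 1)) ^ 2 * P₁ y
      = (-1) / (y - t + c) ^ 2 * P₁ y := by
    intro y; rw [hc, one_div]
  simp only [hcongr]
  rw [hFTC, hgt, hg0]
end

section
/- Let F : [0,∞) → ℝ be a cumulative distribution function of a nonnegative random variable (F nondecreasing, F(0) = 0, F(t) → 1 as t → ∞), continuously differentiable on [0,∞), satisfying the renewal equation F(t) = 2t/(1+t)³ + ∫₀ᵗ 2/(1+(t−y))³ · F(y) dy for all t ≥ 0. Then ∫₀ʰ t² F′(t) dt ~ h as h → ∞, i.e. (∫₀ʰ t² F′(t) dt)/h → 1 as h → ∞. -/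
open MeasureTheory Filter Set intervalIntegral Topology Real

/-- derivative of y ↦ 1/(1+(c-y))^2 is 2/(1+(c-y))^3 -/
lemma hasDerivAt_ker (c y : ℝ) (h : 1 + (c - y) ≠ 0) :
    HasDerivAt (fun y : ℝ => 1 / (1 + (c - y)) ^ 2) (2 / (1 + (c - y)) ^ 3) y := by
  have h1 : HasDerivAt (fun y : ℝ => 1 + (c - y)) (-1) y := by
    simpa using ((hasDerivAt_id y).const_sub c).const_add 1
  have h2 : HasDerivAt (fun y : ℝ => (1 + (c - y)) ^ 2) (2 * (1 + (c - y)) ^ 1 * (-1)) y :=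
    h1.pow 2
  have h3 := h2.inv (pow_ne_zero 2 h)
  have h4 : HasDerivAt (fun y : ℝ => ((1 + (c - y)) ^ 2)⁻¹) (2 / (1 + (c - y)) ^ 3) y := by
    refine h3.congr_deriv ?_; field_simp
  simpa [one_div] using h4

/-- derivative of y ↦ 1/(1+(c-y)) is 1/(1+(c-y))^2 -/
lemma hasDerivAt_ker1 (c y : ℝ) (h : 1 + (c - y) ≠ 0) :
    HasDerivAt (fun y : ℝ => 1 / (1 + (c - y))) (1 / (1 + (c - y)) ^ 2) y := by
  have h1 : HasDerivAt (fun y : ℝ => 1 + (c - y)) (-1) y := by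
    simpa using ((hasDerivAt_id y).const_sub c).const_add 1
  have h3 := h1.inv h
  have h4 : HasDerivAt (fun y : ℝ => (1 + (c - y))⁻¹) (1 / (1 + (c - y)) ^ 2) y := by
    refine h3.congr_deriv ?_; field_simp
  simpa [one_div] using h4

lemma pos_ker {c y : ℝ} (h : y ≤ c) : (0:ℝ) < 1 + (c - y) := by linarith

/-- ∫ y in x..t, 2/(1+(t-y))^3 dy = 1/(1+(t-x))^2 - 1/(1+(t-t))^2 -/
lemma integral_ker (t x z : ℝ) (hx : x ≤ t) (hz : z ≤ t) :
    ∫ y in x..z, 2 / (1 + (t - y)) ^ 3 = 1 / (1 + (t - z)) ^ 2 - 1 / (1 + (t - x)) ^ 2 := by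
  apply intervalIntegral.integral_eq_sub_of_hasDerivAt
  · intro y hy
    have : y ≤ t := le_trans (hy.2) (by cases le_total x z with
      | inl h => simpa [max_eq_right h] using hz
      | inr h => simpa [max_eq_left h] using hx)
    exact hasDerivAt_ker t y (ne_of_gt (pos_ker this))
  · apply ContinuousOn.intervalIntegrable
    apply ContinuousOn.div continuousOn_const
    · fun_prop
    · intro y hy
      have : y ≤ t := le_trans (hy.2) (by cases le_total x z with
        | inl h => simpa [max_eq_right h] using hz
        | inr h => simpa [max_eq_left h] using hx)
      exact pow_ne_zero 3 (ne_of_gt (pos_ker this))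

lemma integral_ker1 (t x z : ℝ) (hx : x ≤ t) (hz : z ≤ t) :
    ∫ y in x..z, 1 / (1 + (t - y)) ^ 2 = 1 / (1 + (t - z)) - 1 / (1 + (t - x)) := by
  apply intervalIntegral.integral_eq_sub_of_hasDerivAt
  · intro y hy
    have : y ≤ t := le_trans (hy.2) (by cases le_total x z with
      | inl h => simpa [max_eq_right h] using hz
      | inr h => simpa [max_eq_left h] using hx)
    exact hasDerivAt_ker1 t y (ne_of_gt (pos_ker this))
  · apply ContinuousOn.intervalIntegrable
    apply ContinuousOn.div continuousOn_const
    · fun_prop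
    · intro y hy
      have : y ≤ t := le_trans (hy.2) (by cases le_total x z with
        | inl h => simpa [max_eq_right h] using hz
        | inr h => simpa [max_eq_left h] using hx)
      exact pow_ne_zero 2 (ne_of_gt (pos_ker this))

/-- ∫ t in 0..T, 2t/(1+t)^3 dt = T^2/(1+T)^2 -/
lemma integral_z (T : ℝ) (hT : 0 ≤ T) :
    ∫ t in (0:ℝ)..T, 2 * t / (1 + t) ^ 3 = T ^ 2 / (1 + T) ^ 2 := by
  have : ∫ t in (0:ℝ)..T, 2 * t / (1 + t) ^ 3
      = (T ^ 2 / (1 + T) ^ 2) - (0 ^ 2 / (1 + (0:ℝ)) ^ 2) := by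
    apply intervalIntegral.integral_eq_sub_of_hasDerivAt
    · intro y hy
      have hy0 : 0 ≤ y := by simpa [hT] using hy.1
      have hne : (1 + y) ≠ 0 := by positivity
      have h1 : HasDerivAt (fun y : ℝ => y ^ 2) (2 * y) y := by
        exact ((hasDerivAt_id y).pow 2).congr_deriv (by simp)
      have h2 : HasDerivAt (fun y : ℝ => (1 + y) ^ 2) (2 * (1 + y)) y := by
        exact (((hasDerivAt_id y).const_add 1).pow 2).congr_deriv (by simp)
      have h3 := h1.div h2 (pow_ne_zero 2 hne)
      refine h3.congr_deriv ?_
      field_simp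
      ring
    · apply ContinuousOn.intervalIntegrable
      apply ContinuousOn.div (by fun_prop) (by fun_prop)
      intro y hy
      have hy0 : 0 ≤ y := by simpa [hT] using hy.1
      positivity
  simpa using this

-- first-slot kernel integral: ∫ t in y..T, 2/(1+(t-y))^3 dt = 1 - 1/(1+(T-y))^2
lemma integral_ker' (y T : ℝ) (h : y ≤ T) :
    ∫ t in y..T, 2 / (1 + (t - y)) ^ 3 = 1 - 1 / (1 + (T - y)) ^ 2 := by
  have : ∫ t in y..T, 2 / (1 + (t - y)) ^ 3
      = (-(1 / (1 + (T - y)) ^ 2)) - (-(1 / (1 + (y - y)) ^ 2)) := by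
    apply intervalIntegral.integral_eq_sub_of_hasDerivAt
    · intro t ht
      rw [uIcc_of_le h] at ht
      have hyt : y ≤ t := ht.1
      have hpos : (0:ℝ) < 1 + (t - y) := by linarith
      have h1 : HasDerivAt (fun t : ℝ => 1 + (t - y)) 1 t := by
        simpa using ((hasDerivAt_id t).sub_const y).const_add 1
      have h2 : HasDerivAt (fun t : ℝ => (1 + (t - y)) ^ 2) (2 * (1 + (t - y)) ^ 1 * 1) t :=
        h1.pow 2
      have h3 := (h2.inv (by positivity)).neg
      have h4 : HasDerivAt (fun t : ℝ => -(((1 + (t - y)) ^ 2)⁻¹)) (2 / (1 + (t - y)) ^ 3) t := by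
        refine h3.congr_deriv ?_
        field_simp
      simpa [one_div] using h4
    · apply ContinuousOn.intervalIntegrable
      apply ContinuousOn.div continuousOn_const (by fun_prop)
      intro t ht
      rw [uIcc_of_le h] at ht
      have : (0:ℝ) < 1 + (t - y) := by linarith [ht.1]
      positivity
  rw [this]; simp; ring

section
variable (F : ℝ → ℝ)

set_option maxHeartbeats 2000000 in
lemma key_identity
    (hFc : ContinuousOn F (Ici 0))
    (hF0 : ∀ y : ℝ, 0 ≤ y → 0 ≤ F y) (hF1 : ∀ y : ℝ, 0 ≤ y → F y ≤ 1)
    (hrenewal : ∀ t, 0 ≤ t →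
      F t = 2 * t / (1 + t) ^ 3 + ∫ y in (0:ℝ)..t, 2 / (1 + (t - y)) ^ 3 * F y)
    (hz : ∀ T : ℝ, 0 ≤ T → ∫ t in (0:ℝ)..T, 2 * t / (1 + t) ^ 3 = T ^ 2 / (1 + T) ^ 2)
    (hk1 : ∀ t x z : ℝ, x ≤ t → z ≤ t →
      ∫ y in x..z, 1 / (1 + (t - y)) ^ 2 = 1 / (1 + (t - z)) - 1 / (1 + (t - x)))
    (hk' : ∀ y T : ℝ, y ≤ T →
      ∫ t in y..T, 2 / (1 + (t - y)) ^ 3 = 1 - 1 / (1 + (T - y)) ^ 2)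
    (T : ℝ) (hT : 0 ≤ T) :
    ∫ y in (0:ℝ)..T, (1 - F y) / (1 + (T - y)) ^ 2 = T / (1 + T) ^ 2 := by
  classical
  set Fc : ℝ → ℝ := fun y => F (max y 0) with hFcdef
  have hFcCont : Continuous Fc := by
    apply hFc.comp_continuous (by fun_prop)
    intro x; exact mem_Ici.2 (le_max_right x 0)
  have hFcEq : ∀ y : ℝ, 0 ≤ y → Fc y = F y := fun y hy => by
    simp [hFcdef, max_eq_left hy]
  have hFc01 : ∀ y : ℝ, 0 ≤ Fc y ∧ Fc y ≤ 1 := fun y =>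
    ⟨hF0 _ (le_max_right y 0), hF1 _ (le_max_right y 0)⟩
  set Ψ : ℝ × ℝ → ℝ :=
    fun p => if p.2 ≤ p.1 then 2 / (1 + (p.1 - p.2)) ^ 3 * Fc p.2 else 0 with hΨdef
  have hΨmeas : Measurable Ψ := by
    apply Measurable.ite (measurableSet_le measurable_snd measurable_fst)
    · exact ((measurable_const.div (by measurability)).mul
        (hFcCont.measurable.comp measurable_snd))
    · exact measurable_const
  have hΨbdd : ∀ p : ℝ × ℝ, |Ψ p| ≤ 2 := by
    intro p
    rw [hΨdef]
    dsimp only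
    split_ifs with hp
    · have h1 : (1:ℝ) ≤ 1 + (p.1 - p.2) := by linarith
      have h13 : (1:ℝ) ≤ (1 + (p.1 - p.2)) ^ 3 := one_le_pow₀ h1
      have hk : 2 / (1 + (p.1 - p.2)) ^ 3 ≤ 2 := by
        rw [div_le_iff₀ (by positivity)]
        nlinarith
      have hk0 : 0 ≤ 2 / (1 + (p.1 - p.2)) ^ 3 := by positivity
      rw [abs_of_nonneg (mul_nonneg hk0 (hFc01 _).1)]
      calc 2 / (1 + (p.1 - p.2)) ^ 3 * Fc p.2 ≤ 2 * 1 :=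
            mul_le_mul hk (hFc01 _).2 (hFc01 _).1 (by norm_num)
        _ = 2 := by ring
    · simp
  have hμfin : IsFiniteMeasure (volume.restrict (Ioc (0:ℝ) T)) := by
    constructor
    rw [Measure.restrict_apply MeasurableSet.univ, Set.univ_inter, Real.volume_Ioc]
    exact ENNReal.ofReal_lt_top
  haveI := hμfin
  have hΨint : Integrable Ψ
      ((volume.restrict (Ioc (0:ℝ) T)).prod (volume.restrict (Ioc (0:ℝ) T))) := by
    refine Integrable.mono' (integrable_const 2) hΨmeas.aestronglyMeasurable ?_
    exact Filter.Eventually.of_forall hΨbdd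
  have hFint : IntervalIntegrable F volume 0 T :=
    ContinuousOn.intervalIntegrable (hFc.mono (by rw [uIcc_of_le hT]; exact Icc_subset_Ici_self))
  have hzint : IntervalIntegrable (fun t => 2 * t / (1 + t) ^ 3) volume 0 T := by
    apply ContinuousOn.intervalIntegrable
    apply ContinuousOn.div (by fun_prop) (by fun_prop)
    intro t ht
    rw [uIcc_of_le hT] at ht
    have : (0:ℝ) ≤ t := ht.1
    positivity
  have stepI : (∫ t in (0:ℝ)..T, ∫ y in (0:ℝ)..t, 2 / (1 + (t - y)) ^ 3 * F y)
      = (∫ t in (0:ℝ)..T, F t) - T ^ 2 / (1 + T) ^ 2 := by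
    have hcongr : ∀ t ∈ uIcc (0:ℝ) T,
        (∫ y in (0:ℝ)..t, 2 / (1 + (t - y)) ^ 3 * F y)
          = F t - 2 * t / (1 + t) ^ 3 := by
      intro t ht
      rw [uIcc_of_le hT] at ht
      rw [hrenewal t ht.1]
      ring
    rw [intervalIntegral.integral_congr hcongr,
      intervalIntegral.integral_sub hFint hzint, hz T hT]
  have stepII : (∫ t in (0:ℝ)..T, ∫ y in (0:ℝ)..t, 2 / (1 + (t - y)) ^ 3 * F y)
      = ∫ y in (0:ℝ)..T, F y * (1 - 1 / (1 + (T - y)) ^ 2) := by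
    rw [intervalIntegral.integral_of_le hT]
    have h1 : ∀ t ∈ Ioc (0:ℝ) T,
        (∫ y in (0:ℝ)..t, 2 / (1 + (t - y)) ^ 3 * F y)
          = ∫ y in Ioc (0:ℝ) T, Ψ (t, y) := by
      intro t ht
      rw [intervalIntegral.integral_of_le ht.1.le]
      have e1 : ∀ y ∈ Ioc (0:ℝ) t,
          2 / (1 + (t - y)) ^ 3 * F y = 2 / (1 + (t - y)) ^ 3 * Fc y := by
        intro y hy; rw [hFcEq y hy.1.le]
      rw [setIntegral_congr_fun measurableSet_Ioc e1]
      have e2 : ∀ y : ℝ, Ψ (t, y) = (Iic t).indicator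
          (fun y => 2 / (1 + (t - y)) ^ 3 * Fc y) y := by
        intro y
        rw [hΨdef, Set.indicator_apply]
        simp [Set.mem_Iic]
      rw [setIntegral_congr_fun measurableSet_Ioc (fun y _ => e2 y),
        setIntegral_indicator measurableSet_Iic, Set.Ioc_inter_Iic,
        min_eq_right ht.2]
    rw [setIntegral_congr_fun measurableSet_Ioc h1]
    rw [MeasureTheory.integral_integral_swap (f := fun t y => Ψ (t, y)) (by exact hΨint)]
    have h2 : ∀ y ∈ Ioc (0:ℝ) T,
        (∫ t in Ioc (0:ℝ) T, Ψ (t, y))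
          = F y * (1 - 1 / (1 + (T - y)) ^ 2) := by
      intro y hy
      have e3 : ∀ t : ℝ, Ψ (t, y) = (Ici y).indicator
          (fun t => 2 / (1 + (t - y)) ^ 3 * Fc y) t := by
        intro t
        rw [hΨdef, Set.indicator_apply]
        simp [Set.mem_Ici]
      rw [setIntegral_congr_fun measurableSet_Ioc (fun t _ => e3 t),
        setIntegral_indicator measurableSet_Ici]
      have hset : Ioc (0:ℝ) T ∩ Ici y = Icc y T := by
        ext t
        simp only [Set.mem_inter_iff, Set.mem_Ioc, Set.mem_Ici, Set.mem_Icc]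
        constructor
        · rintro ⟨⟨_, h2⟩, h3⟩; exact ⟨h3, h2⟩
        · rintro ⟨h3, h2⟩; exact ⟨⟨lt_of_lt_of_le hy.1 h3, h2⟩, h3⟩
      rw [hset, MeasureTheory.integral_Icc_eq_integral_Ioc,
        ← intervalIntegral.integral_of_le hy.2,
        intervalIntegral.integral_mul_const, hk' y T hy.2, hFcEq y hy.1.le]
      ring
    rw [setIntegral_congr_fun measurableSet_Ioc h2, ← intervalIntegral.integral_of_le hT]
  -- combine
  have hKcont : ContinuousOn (fun y : ℝ => 1 / (1 + (T - y)) ^ 2) (uIcc 0 T) := by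
    apply ContinuousOn.div continuousOn_const (by fun_prop)
    intro y hy
    rw [uIcc_of_le hT] at hy
    have : (0:ℝ) < 1 + (T - y) := by linarith [hy.2]
    positivity
  have hKint : IntervalIntegrable (fun y : ℝ => 1 / (1 + (T - y)) ^ 2) volume 0 T :=
    hKcont.intervalIntegrable
  have hFKint : IntervalIntegrable (fun y : ℝ => F y * (1 / (1 + (T - y)) ^ 2)) volume 0 T := by
    apply ContinuousOn.intervalIntegrable
    exact (hFc.mono (by rw [uIcc_of_le hT]; exact Icc_subset_Ici_self)).mul hKcont
  have main : (∫ y in (0:ℝ)..T, F y * (1 / (1 + (T - y)) ^ 2)) = T ^ 2 / (1 + T) ^ 2 := by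
    have expand : (∫ y in (0:ℝ)..T, F y * (1 - 1 / (1 + (T - y)) ^ 2))
        = (∫ y in (0:ℝ)..T, F y) - ∫ y in (0:ℝ)..T, F y * (1 / (1 + (T - y)) ^ 2) := by
      rw [← intervalIntegral.integral_sub hFint hFKint]
      apply intervalIntegral.integral_congr
      intro y _
      ring
    have := stepI.symm.trans stepII
    rw [expand] at this
    linarith
  have expand2 : (∫ y in (0:ℝ)..T, (1 - F y) / (1 + (T - y)) ^ 2)
      = (∫ y in (0:ℝ)..T, 1 / (1 + (T - y)) ^ 2)
        - ∫ y in (0:ℝ)..T, F y * (1 / (1 + (T - y)) ^ 2) := by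
    rw [← intervalIntegral.integral_sub hKint hFKint]
    apply intervalIntegral.integral_congr
    intro y _
    ring
  rw [expand2, main, hk1 T 0 T hT le_rfl]
  have h1T : (0:ℝ) < 1 + T := by linarith
  simp only [sub_self, sub_zero, add_zero]
  field_simp
  ring

end

lemma integral_one_div_one_add (x : ℝ) (hx : 0 ≤ x) :
    ∫ y in (0:ℝ)..x, 1 / (1 + y) = Real.log (1 + x) := by
  have : ∫ y in (0:ℝ)..x, 1 / (1 + y) = Real.log (1 + x) - Real.log (1 + 0) := by
    apply intervalIntegral.integral_eq_sub_of_hasDerivAt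
    · intro y hy
      rw [uIcc_of_le hx] at hy
      have h0 : (0:ℝ) < 1 + y := by linarith [hy.1]
      have := (Real.hasDerivAt_log (ne_of_gt h0)).comp y ((hasDerivAt_id y).const_add 1)
      exact this.congr_deriv (by simp)
    · apply ContinuousOn.intervalIntegrable
      apply ContinuousOn.div continuousOn_const (by fun_prop)
      intro y hy
      rw [uIcc_of_le hx] at hy
      have : (0:ℝ) < 1 + y := by linarith [hy.1]
      linarith
  simpa using this

section
variable (F : ℝ → ℝ)

-- upper bound: 1 - F t ≤ 1/(1+t)
lemma tail_upper
    (hFc : ContinuousOn F (Ici 0))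
    (hmono : ∀ a b : ℝ, 0 ≤ a → a ≤ b → F a ≤ F b)
    (hkey : ∀ T : ℝ, 0 ≤ T →
      ∫ y in (0:ℝ)..T, (1 - F y) / (1 + (T - y)) ^ 2 = T / (1 + T) ^ 2)
    (hk1 : ∀ t x z : ℝ, x ≤ t → z ≤ t →
      ∫ y in x..z, 1 / (1 + (t - y)) ^ 2 = 1 / (1 + (t - z)) - 1 / (1 + (t - x)))
    (hzero : F 0 = 0) :
    ∀ t : ℝ, 0 ≤ t → 1 - F t ≤ 1 / (1 + t) := by
  intro t ht
  rcases eq_or_lt_of_le ht with h | htpos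
  · rw [← h, hzero]; norm_num
  have h1t : (0:ℝ) < 1 + t := by linarith
  have hKcont : ContinuousOn (fun y : ℝ => 1 / (1 + (t - y)) ^ 2) (Icc 0 t) := by
    apply ContinuousOn.div continuousOn_const (by fun_prop)
    intro y hy
    have : (0:ℝ) < 1 + (t - y) := by linarith [hy.2]
    positivity
  have hint1 : IntervalIntegrable (fun y => (1 - F t) / (1 + (t - y)) ^ 2) volume 0 t := by
    apply ContinuousOn.intervalIntegrable
    rw [uIcc_of_le ht]
    apply ContinuousOn.div continuousOn_const (by fun_prop)
    intro y hy
    have : (0:ℝ) < 1 + (t - y) := by linarith [hy.2]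
    positivity
  have hint2 : IntervalIntegrable (fun y => (1 - F y) / (1 + (t - y)) ^ 2) volume 0 t := by
    apply ContinuousOn.intervalIntegrable
    rw [uIcc_of_le ht]
    apply ContinuousOn.div (continuousOn_const.sub (hFc.mono Icc_subset_Ici_self)) (by fun_prop)
    intro y hy
    have : (0:ℝ) < 1 + (t - y) := by linarith [hy.2]
    positivity
  have hle : (∫ y in (0:ℝ)..t, (1 - F t) / (1 + (t - y)) ^ 2)
      ≤ ∫ y in (0:ℝ)..t, (1 - F y) / (1 + (t - y)) ^ 2 := by
    apply intervalIntegral.integral_mono_on ht hint1 hint2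
    intro y hy
    have h1 : F y ≤ F t := hmono y t hy.1 hy.2
    have hpos : (0:ℝ) < 1 + (t - y) := by linarith [hy.2]
    gcongr
  have lhs_eq : (∫ y in (0:ℝ)..t, (1 - F t) / (1 + (t - y)) ^ 2)
      = (1 - F t) * (t / (1 + t)) := by
    have : (∫ y in (0:ℝ)..t, (1 - F t) / (1 + (t - y)) ^ 2)
        = ∫ y in (0:ℝ)..t, (1 - F t) * (1 / (1 + (t - y)) ^ 2) := by
      apply intervalIntegral.integral_congr
      intro y _; ring
    rw [this, intervalIntegral.integral_const_mul, hk1 t 0 t ht le_rfl]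
    have : 1 / (1 + (t - t)) - 1 / (1 + (t - 0)) = t / (1 + t) := by
      simp only [sub_self, sub_zero, add_zero]
      field_simp
      ring
    rw [this]
  rw [lhs_eq, hkey t ht] at hle
  -- (1 - F t) * (t/(1+t)) ≤ t/(1+t)^2  ⟹  1 - F t ≤ 1/(1+t)
  rw [le_div_iff₀ h1t]
  have e1 : (1 - F t) * (t / (1 + t)) = ((1 - F t) * t) / (1 + t) := by ring
  rw [e1, div_le_div_iff₀ h1t (by positivity)] at hle
  nlinarith [mul_pos htpos h1t]

-- lower bound
lemma tail_lower
    (hFc : ContinuousOn F (Ici 0))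
    (hmono : ∀ a b : ℝ, 0 ≤ a → a ≤ b → F a ≤ F b)
    (hF1 : ∀ y : ℝ, 0 ≤ y → F y ≤ 1)
    (hkey : ∀ T : ℝ, 0 ≤ T →
      ∫ y in (0:ℝ)..T, (1 - F y) / (1 + (T - y)) ^ 2 = T / (1 + T) ^ 2)
    (hk1 : ∀ t x z : ℝ, x ≤ t → z ≤ t →
      ∫ y in x..z, 1 / (1 + (t - y)) ^ 2 = 1 / (1 + (t - z)) - 1 / (1 + (t - x)))
    (hup : ∀ t : ℝ, 0 ≤ t → 1 - F t ≤ 1 / (1 + t)) :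
    ∀ x : ℝ, 1 ≤ x →
      (x + x ^ ((3:ℝ)/4)) / (1 + (x + x ^ ((3:ℝ)/4))) ^ 2
        - Real.log (1 + x) / (1 + x ^ ((3:ℝ)/4)) ^ 2 ≤ 1 - F x := by
  intro x hx
  have hx0 : (0:ℝ) < x := by linarith
  set r : ℝ := x ^ ((3:ℝ)/4) with hrdef
  have hr0 : 0 < r := Real.rpow_pos_of_pos hx0 _
  have hrx : r ≤ x := by
    calc r ≤ x ^ (1:ℝ) := Real.rpow_le_rpow_of_exponent_le hx (by norm_num)
      _ = x := Real.rpow_one x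
  set t : ℝ := x + r with htdef
  have hxt : x ≤ t := by simp [htdef]; positivity
  have ht0 : (0:ℝ) ≤ t := by linarith
  -- continuity of the integrand
  have hgcont : ContinuousOn (fun y : ℝ => (1 - F y) / (1 + (t - y)) ^ 2) (Icc 0 t) := by
    apply ContinuousOn.div (continuousOn_const.sub (hFc.mono Icc_subset_Ici_self)) (by fun_prop)
    intro y hy
    have : (0:ℝ) < 1 + (t - y) := by linarith [hy.2]
    positivity
  have hint0x : IntervalIntegrable (fun y : ℝ => (1 - F y) / (1 + (t - y)) ^ 2) volume 0 x :=
    (hgcont.mono (by rw [uIcc_of_le hx0.le]; exact Icc_subset_Icc le_rfl hxt)).intervalIntegrable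
  have hintxt : IntervalIntegrable (fun y : ℝ => (1 - F y) / (1 + (t - y)) ^ 2) volume x t :=
    (hgcont.mono (by rw [uIcc_of_le hxt]; exact Icc_subset_Icc hx0.le le_rfl)).intervalIntegrable
  have hsplit : (∫ y in (0:ℝ)..x, (1 - F y) / (1 + (t - y)) ^ 2)
      + (∫ y in x..t, (1 - F y) / (1 + (t - y)) ^ 2) = t / (1 + t) ^ 2 := by
    rw [intervalIntegral.integral_add_adjacent_intervals hint0x hintxt]
    exact hkey t ht0
  -- bound on [0,x]
  have boundA : (∫ y in (0:ℝ)..x, (1 - F y) / (1 + (t - y)) ^ 2)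
      ≤ Real.log (1 + x) / (1 + r) ^ 2 := by
    have hcompint : IntervalIntegrable
        (fun y : ℝ => 1 / (1 + y) * (1 / (1 + r) ^ 2)) volume 0 x := by
      apply ContinuousOn.intervalIntegrable
      apply ContinuousOn.mul ?_ continuousOn_const
      apply ContinuousOn.div continuousOn_const (by fun_prop)
      intro y hy
      rw [uIcc_of_le hx0.le] at hy
      have : (0:ℝ) < 1 + y := by linarith [hy.1]
      linarith
    have hmono2 := intervalIntegral.integral_mono_on hx0.le hint0x hcompint ?_
    · calc (∫ y in (0:ℝ)..x, (1 - F y) / (1 + (t - y)) ^ 2)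
          ≤ ∫ y in (0:ℝ)..x, 1 / (1 + y) * (1 / (1 + r) ^ 2) := hmono2
        _ = Real.log (1 + x) / (1 + r) ^ 2 := by
            rw [intervalIntegral.integral_mul_const, integral_one_div_one_add x hx0.le]
            ring
    · intro y hy
      have hy0 : 0 ≤ y := hy.1
      have hyx : y ≤ x := hy.2
      have h1y : (0:ℝ) < 1 + y := by linarith
      have hty : r ≤ t - y := by simp only [htdef]; linarith
      have h1ty : (0:ℝ) < 1 + (t - y) := by linarith
      have a1 : (0:ℝ) ≤ 1 - F y := by
        have := hup y hy0; have : F y ≤ 1 := hF1 y hy0; linarith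
      have a2 : 1 - F y ≤ 1 / (1 + y) := hup y hy0
      have a3 : 1 / (1 + (t - y)) ^ 2 ≤ 1 / (1 + r) ^ 2 := by
        gcongr
      calc (1 - F y) / (1 + (t - y)) ^ 2
          = (1 - F y) * (1 / (1 + (t - y)) ^ 2) := by ring
        _ ≤ (1 / (1 + y)) * (1 / (1 + r) ^ 2) := by
            apply mul_le_mul a2 a3 (by positivity) (by positivity)
  -- bound on [x,t]
  have boundB : (∫ y in x..t, (1 - F y) / (1 + (t - y)) ^ 2) ≤ 1 - F x := by
    have hFx : (0:ℝ) ≤ 1 - F x := by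
      have := hF1 x hx0.le; linarith
    have hcompint : IntervalIntegrable
        (fun y : ℝ => (1 - F x) / (1 + (t - y)) ^ 2) volume x t := by
      apply ContinuousOn.intervalIntegrable
      apply ContinuousOn.div continuousOn_const (by fun_prop)
      intro y hy
      rw [uIcc_of_le hxt] at hy
      have : (0:ℝ) < 1 + (t - y) := by linarith [hy.2]
      positivity
    have hmono2 := intervalIntegral.integral_mono_on hxt hintxt hcompint ?_
    · calc (∫ y in x..t, (1 - F y) / (1 + (t - y)) ^ 2)
          ≤ ∫ y in x..t, (1 - F x) / (1 + (t - y)) ^ 2 := hmono2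
        _ = (1 - F x) * (1 / (1 + (t - t)) - 1 / (1 + (t - x))) := by
            rw [show (fun y : ℝ => (1 - F x) / (1 + (t - y)) ^ 2)
                = fun y : ℝ => (1 - F x) * (1 / (1 + (t - y)) ^ 2) from
              funext fun y => by ring]
            rw [intervalIntegral.integral_const_mul, hk1 t x t hxt le_rfl]
        _ ≤ (1 - F x) * 1 := by
            apply mul_le_mul_of_nonneg_left ?_ hFx
            have htx : t - x = r := by simp [htdef]
            rw [htx]
            have : (0:ℝ) < 1 + r := by linarith
            have h2 : 0 < 1 / (1 + r) := by positivity
            simp only [sub_self]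
            norm_num
            positivity
        _ = 1 - F x := by ring
    · intro y hy
      have h1ty : (0:ℝ) < 1 + (t - y) := by linarith [hy.2]
      have : F x ≤ F y := hmono x y hx0.le hy.1
      gcongr
  linarith [hsplit, boundA, boundB]
end

lemma tendsto_self_div_one_add : Tendsto (fun s : ℝ => s / (1 + s)) atTop (𝓝 1) := by
  have h0 : Tendsto (fun s : ℝ => 1 + s) atTop atTop :=
    tendsto_atTop_add_const_left _ 1 tendsto_id
  have h1 : Tendsto (fun s : ℝ => 1 / (1 + s)) atTop (𝓝 0) :=
    Tendsto.div_atTop tendsto_const_nhds h0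
  have h2 : Tendsto (fun s : ℝ => 1 - 1 / (1 + s)) atTop (𝓝 (1 - 0)) :=
    tendsto_const_nhds.sub h1
  refine Tendsto.congr' ?_ (by simpa using h2)
  filter_upwards [eventually_ge_atTop (0:ℝ)] with s hs
  have h3 : (0:ℝ) < 1 + s := by linarith
  field_simp
  ring

lemma tendsto_log_one_add_div_sqrt :
    Tendsto (fun x : ℝ => Real.log (1 + x) / x ^ ((1:ℝ)/2)) atTop (𝓝 0) := by
  have hA : Tendsto (fun x : ℝ => Real.log 2 / x ^ ((1:ℝ)/2)) atTop (𝓝 0) :=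
    Tendsto.div_atTop tendsto_const_nhds (tendsto_rpow_atTop (by norm_num))
  have hB : Tendsto (fun x : ℝ => Real.log x / x ^ ((1:ℝ)/2)) atTop (𝓝 0) :=
    (isLittleO_log_rpow_atTop (by norm_num)).tendsto_div_nhds_zero
  have hS : Tendsto (fun x : ℝ => Real.log 2 / x ^ ((1:ℝ)/2) + Real.log x / x ^ ((1:ℝ)/2))
      atTop (𝓝 0) := by simpa using hA.add hB
  apply tendsto_of_tendsto_of_tendsto_of_le_of_le' tendsto_const_nhds hS
  · filter_upwards [eventually_ge_atTop (1:ℝ)] with x hx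
    have h1 : (1:ℝ) ≤ 1 + x := by linarith
    have h2 : (0:ℝ) < x ^ ((1:ℝ)/2) := Real.rpow_pos_of_pos (by linarith) _
    exact div_nonneg (Real.log_nonneg h1) h2.le
  · filter_upwards [eventually_ge_atTop (1:ℝ)] with x hx
    have hx0 : (0:ℝ) < x := by linarith
    have h2 : (0:ℝ) < x ^ ((1:ℝ)/2) := Real.rpow_pos_of_pos hx0 _
    rw [← add_div]
    gcongr
    rw [← Real.log_mul (by norm_num) (ne_of_gt hx0)]
    exact Real.log_le_log (by linarith) (by linarith)

lemma tail_tendsto (F : ℝ → ℝ)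
    (hF1 : ∀ y : ℝ, 0 ≤ y → F y ≤ 1)
    (hup : ∀ t : ℝ, 0 ≤ t → 1 - F t ≤ 1 / (1 + t))
    (hlow : ∀ x : ℝ, 1 ≤ x →
      (x + x ^ ((3:ℝ)/4)) / (1 + (x + x ^ ((3:ℝ)/4))) ^ 2
        - Real.log (1 + x) / (1 + x ^ ((3:ℝ)/4)) ^ 2 ≤ 1 - F x) :
    Tendsto (fun x : ℝ => x * (1 - F x)) atTop (𝓝 1) := by
  -- upper comparison function
  have hU : Tendsto (fun x : ℝ => x / (1 + x)) atTop (𝓝 1) := tendsto_self_div_one_add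
  -- t x = x + x^(3/4) tends to atTop
  have httop : Tendsto (fun x : ℝ => x + x ^ ((3:ℝ)/4)) atTop atTop := by
    apply tendsto_atTop_mono' atTop ?_ tendsto_id
    filter_upwards [eventually_ge_atTop (1:ℝ)] with x hx
    have : (0:ℝ) < x ^ ((3:ℝ)/4) := Real.rpow_pos_of_pos (by linarith) _
    simp only [id]
    linarith
  -- T1 : x * (t/(1+t)^2) → 1
  have hA : Tendsto (fun x : ℝ => x / (x + x ^ ((3:ℝ)/4))) atTop (𝓝 1) := by
    have hinv : Tendsto (fun x : ℝ => x ^ (-((1:ℝ)/4))) atTop (𝓝 0) :=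
      tendsto_rpow_neg_atTop (by norm_num)
    have hq : Tendsto (fun x : ℝ => 1 / (1 + x ^ (-((1:ℝ)/4)))) atTop (𝓝 1) := by
      have hd : Tendsto (fun x : ℝ => 1 + x ^ (-((1:ℝ)/4))) atTop (𝓝 (1 + 0)) :=
        tendsto_const_nhds.add hinv
      have := (tendsto_const_nhds : Tendsto (fun _ : ℝ => (1:ℝ)) atTop (𝓝 1)).div hd
        (by norm_num)
      simpa [Pi.div_def] using this
    refine Tendsto.congr' ?_ hq
    filter_upwards [eventually_ge_atTop (1:ℝ)] with x hx
    have hx0 : (0:ℝ) < x := by linarith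
    have hsplit : x + x ^ ((3:ℝ)/4) = x * (1 + x ^ (-((1:ℝ)/4))) := by
      have e1 : x * x ^ (-((1:ℝ)/4)) = x ^ ((3:ℝ)/4) := by
        rw [show x * x ^ (-((1:ℝ)/4)) = x ^ (1:ℝ) * x ^ (-((1:ℝ)/4)) by rw [Real.rpow_one],
          ← Real.rpow_add hx0]
        norm_num
      rw [mul_add, mul_one, e1]
    have hc : ((1:ℝ) + x ^ (-((1:ℝ)/4))) ≠ 0 := by positivity
    rw [hsplit]
    field_simp
  have hB : Tendsto (fun x : ℝ =>
      (x + x ^ ((3:ℝ)/4)) / (1 + (x + x ^ ((3:ℝ)/4)))) atTop (𝓝 1) :=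
    tendsto_self_div_one_add.comp httop
  have hT1 : Tendsto (fun x : ℝ =>
      x * ((x + x ^ ((3:ℝ)/4)) / (1 + (x + x ^ ((3:ℝ)/4))) ^ 2)) atTop (𝓝 1) := by
    have hprod := hA.mul (hB.pow 2)
    rw [show (1:ℝ) * 1 ^ 2 = 1 by norm_num] at hprod
    refine Tendsto.congr' ?_ hprod
    filter_upwards [eventually_ge_atTop (1:ℝ)] with x hx
    have hx0 : (0:ℝ) < x := by linarith
    have hr0 : (0:ℝ) < x ^ ((3:ℝ)/4) := Real.rpow_pos_of_pos hx0 _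
    have ht0 : (0:ℝ) < x + x ^ ((3:ℝ)/4) := by linarith
    have h1t : (0:ℝ) < 1 + (x + x ^ ((3:ℝ)/4)) := by linarith
    field_simp
  -- T2 : x * (log(1+x)/(1+x^(3/4))^2) → 0
  have hT2 : Tendsto (fun x : ℝ =>
      x * (Real.log (1 + x) / (1 + x ^ ((3:ℝ)/4)) ^ 2)) atTop (𝓝 0) := by
    apply tendsto_of_tendsto_of_tendsto_of_le_of_le' tendsto_const_nhds
      tendsto_log_one_add_div_sqrt
    · filter_upwards [eventually_ge_atTop (1:ℝ)] with x hx
      have hx0 : (0:ℝ) < x := by linarith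
      have hr0 : (0:ℝ) < x ^ ((3:ℝ)/4) := Real.rpow_pos_of_pos hx0 _
      have hlog : (0:ℝ) ≤ Real.log (1 + x) := Real.log_nonneg (by linarith)
      positivity
    · filter_upwards [eventually_ge_atTop (1:ℝ)] with x hx
      have hx0 : (0:ℝ) < x := by linarith
      have hr0 : (0:ℝ) < x ^ ((3:ℝ)/4) := Real.rpow_pos_of_pos hx0 _
      have hlog : (0:ℝ) ≤ Real.log (1 + x) := Real.log_nonneg (by linarith)
      have hden : x ^ ((3:ℝ)/2) ≤ (1 + x ^ ((3:ℝ)/4)) ^ 2 := by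
        have e1 : (x ^ ((3:ℝ)/4)) ^ 2 = x ^ ((3:ℝ)/2) := by
          rw [← Real.rpow_natCast (x ^ ((3:ℝ)/4)) 2, ← Real.rpow_mul hx0.le]
          norm_num
        nlinarith [hr0]
      have hxx : x * x ^ ((1:ℝ)/2) = x ^ ((3:ℝ)/2) := by
        rw [show x * x ^ ((1:ℝ)/2) = x ^ (1:ℝ) * x ^ ((1:ℝ)/2) by rw [Real.rpow_one],
          ← Real.rpow_add hx0]
        norm_num
      calc x * (Real.log (1 + x) / (1 + x ^ ((3:ℝ)/4)) ^ 2)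
          = (x * Real.log (1 + x)) / (1 + x ^ ((3:ℝ)/4)) ^ 2 := by ring
        _ ≤ (x * Real.log (1 + x)) / x ^ ((3:ℝ)/2) := by
            apply div_le_div_of_nonneg_left (by positivity)
              (Real.rpow_pos_of_pos hx0 _) hden
        _ = Real.log (1 + x) / x ^ ((1:ℝ)/2) := by
            have hs2 : x ^ ((1:ℝ)/2) ≠ 0 := ne_of_gt (Real.rpow_pos_of_pos hx0 _)
            rw [← hxx]
            field_simp
  -- lower comparison function tends to 1
  have hL : Tendsto (fun x : ℝ =>
      x * ((x + x ^ ((3:ℝ)/4)) / (1 + (x + x ^ ((3:ℝ)/4))) ^ 2)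
        - x * (Real.log (1 + x) / (1 + x ^ ((3:ℝ)/4)) ^ 2)) atTop (𝓝 1) := by
    simpa using hT1.sub hT2
  -- squeeze
  apply tendsto_of_tendsto_of_tendsto_of_le_of_le' hL hU
  · filter_upwards [eventually_ge_atTop (1:ℝ)] with x hx
    have hx0 : (0:ℝ) ≤ x := by linarith
    have := mul_le_mul_of_nonneg_left (hlow x hx) hx0
    calc x * ((x + x ^ ((3:ℝ)/4)) / (1 + (x + x ^ ((3:ℝ)/4))) ^ 2)
          - x * (Real.log (1 + x) / (1 + x ^ ((3:ℝ)/4)) ^ 2)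
        = x * ((x + x ^ ((3:ℝ)/4)) / (1 + (x + x ^ ((3:ℝ)/4))) ^ 2
            - Real.log (1 + x) / (1 + x ^ ((3:ℝ)/4)) ^ 2) := by ring
      _ ≤ x * (1 - F x) := this
  · filter_upwards [eventually_ge_atTop (1:ℝ)] with x hx
    have hx0 : (0:ℝ) ≤ x := by linarith
    calc x * (1 - F x) ≤ x * (1 / (1 + x)) :=
          mul_le_mul_of_nonneg_left (hup x hx0) hx0
      _ = x / (1 + x) := by ring

lemma cesaro (g : ℝ → ℝ) (hg : ContinuousOn g (Ici 0))
    (hg1 : Tendsto g atTop (𝓝 1)) :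
    Tendsto (fun h : ℝ => (∫ t in (0:ℝ)..h, g t) / h) atTop (𝓝 1) := by
  rw [Metric.tendsto_atTop]
  intro ε hε
  obtain ⟨M0, hM0⟩ := (Metric.tendsto_atTop.1 hg1) (ε/4) (by linarith)
  set M : ℝ := max M0 0 with hMdef
  have hM0' : (0:ℝ) ≤ M := le_max_right _ _
  have hM : ∀ t : ℝ, M ≤ t → |g t - 1| ≤ ε/4 := by
    intro t ht
    have := hM0 t (le_trans (le_max_left M0 0) ht)
    rw [Real.dist_eq] at this
    linarith
  set C : ℝ := |∫ t in (0:ℝ)..M, (g t - 1)| with hCdef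
  have hC0 : 0 ≤ C := abs_nonneg _
  refine ⟨max (max M 1) (4*C/ε + 1), fun h hh => ?_⟩
  have hhM : M ≤ h := le_trans (le_trans (le_max_left M 1) (le_max_left _ _)) hh
  have hh1 : (1:ℝ) ≤ h := le_trans (le_trans (le_max_right M 1) (le_max_left _ _)) hh
  have hh0 : (0:ℝ) < h := by linarith
  have hhC : 4*C/ε + 1 ≤ h := le_trans (le_max_right _ _) hh
  -- integrability
  have hgint : ∀ a b : ℝ, 0 ≤ a → b ≤ h → a ≤ b →
      IntervalIntegrable (fun t => g t - 1) volume a b := by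
    intro a b ha hb hab
    apply ContinuousOn.intervalIntegrable
    apply ContinuousOn.sub ?_ continuousOn_const
    apply hg.mono
    rw [uIcc_of_le hab]
    exact fun x hx => le_trans ha hx.1
  have hsplit : (∫ t in (0:ℝ)..h, (g t - 1))
      = (∫ t in (0:ℝ)..M, (g t - 1)) + ∫ t in M..h, (g t - 1) :=
    (intervalIntegral.integral_add_adjacent_intervals
      (hgint 0 M le_rfl hhM hM0') (hgint M h hM0' le_rfl hhM)).symm
  have hbound2 : |∫ t in M..h, (g t - 1)| ≤ ε/4 * |h - M| := by
    rw [← Real.norm_eq_abs, ← Real.norm_eq_abs (h - M)]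
    apply intervalIntegral.norm_integral_le_of_norm_le_const
    intro x hx
    rw [uIoc_of_le hhM] at hx
    rw [Real.norm_eq_abs]
    exact hM x hx.1.le
  have habs : |∫ t in (0:ℝ)..h, (g t - 1)| ≤ C + ε/4 * h := by
    rw [hsplit]
    calc |(∫ t in (0:ℝ)..M, (g t - 1)) + ∫ t in M..h, (g t - 1)|
        ≤ C + |∫ t in M..h, (g t - 1)| := by
          rw [hCdef]; exact abs_add_le _ _
      _ ≤ C + ε/4 * |h - M| := by linarith [hbound2]
      _ ≤ C + ε/4 * h := by
          have : |h - M| = h - M := abs_of_nonneg (by linarith)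
          rw [this]
          nlinarith
  have hgi : (∫ t in (0:ℝ)..h, g t) - h = ∫ t in (0:ℝ)..h, (g t - 1) := by
    rw [intervalIntegral.integral_sub ?_ intervalIntegrable_const]
    · simp
    · apply ContinuousOn.intervalIntegrable
      apply hg.mono
      rw [uIcc_of_le hh0.le]
      exact fun x hx => hx.1
  rw [Real.dist_eq]
  have e1 : (∫ t in (0:ℝ)..h, g t) / h - 1 = ((∫ t in (0:ℝ)..h, g t) - h) / h := by
    field_simp
  rw [e1, abs_div, abs_of_pos hh0, hgi]
  rw [div_lt_iff₀ hh0]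
  have hCh : C < ε/4 * h := by
    have h1 : 4*C/ε < h := by linarith
    have h2 : 4*C/ε * ε = 4 * C := by field_simp
    nlinarith
  calc |∫ t in (0:ℝ)..h, (g t - 1)| ≤ C + ε/4 * h := habs
    _ < ε/4 * h + ε/4 * h := by linarith
    _ ≤ ε * h := by nlinarith

set_option maxHeartbeats 1000000 in
/-- For the CDF `F` solving the renewal equation,
`∫₀ʰ t² F'(t) dt ~ h` as `h → ∞`. -/
theorem truncated_second_moment_asymptotic
    (F F' : ℝ → ℝ)
    (hmono : ∀ a b : ℝ, 0 ≤ a → a ≤ b → F a ≤ F b)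
    (hzero : F 0 = 0)
    (hlim : Filter.Tendsto F atTop (nhds 1))
    (hderiv : ∀ t, 0 ≤ t → HasDerivWithinAt F (F' t) (Ici 0) t)
    (hcont : ContinuousOn F' (Ici 0))
    (hrenewal : ∀ t, 0 ≤ t →
      F t = 2 * t / (1 + t) ^ 3 + ∫ y in (0:ℝ)..t, 2 / (1 + (t - y)) ^ 3 * F y) :
    Filter.Tendsto
      (fun h : ℝ => (∫ t in (0:ℝ)..h, t ^ 2 * F' t) / h)
      atTop (nhds 1) := by
  have hFcont : ContinuousOn F (Ici 0) := fun t ht => (hderiv t ht).continuousWithinAt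
  have hF1 : ∀ y : ℝ, 0 ≤ y → F y ≤ 1 := fun y hy =>
    ge_of_tendsto hlim (eventually_atTop.2 ⟨y, fun b hb => hmono y b hy hb⟩)
  have hF0 : ∀ y : ℝ, 0 ≤ y → 0 ≤ F y := fun y hy => hzero ▸ hmono 0 y le_rfl hy
  have hkey : ∀ T : ℝ, 0 ≤ T →
      ∫ y in (0:ℝ)..T, (1 - F y) / (1 + (T - y)) ^ 2 = T / (1 + T) ^ 2 :=
    fun T hT => key_identity F hFcont hF0 hF1 hrenewal integral_z integral_ker1
      integral_ker' T hT
  have hup := tail_upper F hFcont hmono hkey integral_ker1 hzero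
  have hlow := tail_lower F hFcont hmono hF1 hkey integral_ker1 hup
  have htail : Tendsto (fun x : ℝ => x * (1 - F x)) atTop (𝓝 1) :=
    tail_tendsto F hF1 hup hlow
  -- continuity of g t = t * (1 - F t)
  have hgcont : ContinuousOn (fun t : ℝ => t * (1 - F t)) (Ici 0) :=
    continuous_id.continuousOn.mul (continuousOn_const.sub hFcont)
  have hces := cesaro (fun t : ℝ => t * (1 - F t)) hgcont htail
  -- integration by parts
  have hbp : ∀ h : ℝ, 0 ≤ h →
      (∫ t in (0:ℝ)..h, t ^ 2 * F' t)
        = 2 * (∫ t in (0:ℝ)..h, t * (1 - F t)) - h * (h * (1 - F h)) := by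
    intro h hh
    have hIcc : Icc (0:ℝ) h ⊆ Ici 0 := fun x hx => hx.1
    have hFc' : ContinuousOn F (Icc 0 h) := hFcont.mono hIcc
    have hcontf : ContinuousOn (fun t : ℝ => t ^ 2 * F t) (Icc 0 h) :=
      (continuous_pow 2).continuousOn.mul hFc'
    have hint1 : IntervalIntegrable (fun t : ℝ => 2 * t * F t) volume 0 h := by
      apply ContinuousOn.intervalIntegrable
      rw [uIcc_of_le hh]
      exact ((continuous_const.mul continuous_id).continuousOn).mul hFc'
    have hint2 : IntervalIntegrable (fun t : ℝ => t ^ 2 * F' t) volume 0 h := by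
      apply ContinuousOn.intervalIntegrable
      rw [uIcc_of_le hh]
      exact (continuous_pow 2).continuousOn.mul (hcont.mono hIcc)
    have hd : ∀ t ∈ Ioo (0:ℝ) h,
        HasDerivAt (fun t : ℝ => t ^ 2 * F t) (2 * t * F t + t ^ 2 * F' t) t := by
      intro t ht
      have hF : HasDerivAt F (F' t) t :=
        (hderiv t ht.1.le).hasDerivAt (Ici_mem_nhds ht.1)
      have := (hasDerivAt_pow 2 t).mul hF
      refine this.congr_deriv ?_
      push_cast
      ring
    have htot := intervalIntegral.integral_eq_sub_of_hasDerivAt_of_le hh hcontf hd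
      (hint1.add hint2)
    rw [hzero] at htot
    simp only [ne_eq, OfNat.ofNat_ne_zero, not_false_eq_true, zero_pow, zero_mul,
      mul_zero, sub_zero] at htot
    rw [intervalIntegral.integral_add hint1 hint2] at htot
    -- htot : ∫ 2tF + ∫ t²F' = h^2 * F h
    have e2 : (∫ t in (0:ℝ)..h, 2 * t * F t)
        = h ^ 2 - 2 * ∫ t in (0:ℝ)..h, t * (1 - F t) := by
      have hint3 : IntervalIntegrable (fun t : ℝ => 2 * t) volume 0 h :=
        (continuous_const.mul continuous_id).intervalIntegrable 0 h
      have hint4 : IntervalIntegrable (fun t : ℝ => 2 * (t * (1 - F t))) volume 0 h := by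
        apply ContinuousOn.intervalIntegrable
        rw [uIcc_of_le hh]
        exact continuousOn_const.mul (hgcont.mono hIcc)
      have e3 : (∫ t in (0:ℝ)..h, 2 * t * F t)
          = ∫ t in (0:ℝ)..h, (2 * t - 2 * (t * (1 - F t))) := by
        apply intervalIntegral.integral_congr
        intro t _
        ring
      rw [e3, intervalIntegral.integral_sub hint3 hint4,
        intervalIntegral.integral_const_mul, intervalIntegral.integral_const_mul,
        integral_id]
      ring
    rw [e2] at htot
    nlinarith [htot]
  -- final assembly
  have hfinal : Tendsto (fun h : ℝ =>
      2 * ((∫ t in (0:ℝ)..h, t * (1 - F t)) / h) - h * (1 - F h)) atTop (𝓝 1) := by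
    have h2 := (hces.const_mul 2).sub htail
    norm_num at h2
    exact h2
  refine Tendsto.congr' ?_ hfinal
  filter_upwards [eventually_ge_atTop (1:ℝ)] with h hh
  have hh0 : (0:ℝ) < h := by linarith
  rw [hbp h hh0.le]
  field_simp
end
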